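/- arXiv:1807.06528 — 4 statements merged into one kernel-verified Lean document; each statement's English description precedes it below -/
import Mathlib

section
/- Let {x_{i,n}} (1 ≤ i ≤ n) be real numbers with |x_{i,n}| ≤ M for all i, n, and suppose that for every k ∈ ℕ the limit h_k = lim_{n→∞} (1/n) ∑_{i=1}^n x_{i,n}^k exists in ℝ. Then there exists a measurable function k : [0,1] → [−M, M] such that lim_{n→∞} (1/n) ∑_{i=1}^n F(x_{i,n}) = ∫₀¹ F(k(x)) dx for every continuous function F on [−M, M]. -/
open MeasureTheory Filter

open Topology

namespace SpectralSym

/-- The values `x n 0, ..., x n (n-1)` sorted in increasing order. -/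
noncomputable def sl (x : ℕ → ℕ → ℝ) (n : ℕ) : List ℝ :=
  Multiset.sort ((Multiset.range n).map (x n)) (· ≤ ·)

lemma sl_length (x : ℕ → ℕ → ℝ) (n : ℕ) : (sl x n).length = n := by
  simp [sl, Multiset.length_sort]

lemma sl_sorted (x : ℕ → ℕ → ℝ) (n : ℕ) : List.Pairwise (· ≤ ·) (sl x n) :=
  Multiset.pairwise_sort _ _

lemma sl_mem {x : ℕ → ℕ → ℝ} {n : ℕ} {a : ℝ} (h : a ∈ sl x n) : ∃ i < n, x n i = a := by
  simpa [sl, Multiset.mem_sort, Multiset.mem_map, Multiset.mem_range] using h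

/-- The empirical quantile function of `x n ·` : a monotone step function on `[0,1)`. -/
noncomputable def kn (M : ℝ) (x : ℕ → ℕ → ℝ) (n : ℕ) (y : ℝ) : ℝ :=
  (sl x n).getD (⌊y * n⌋).toNat M

lemma getD_mono {l : List ℝ} {M : ℝ} (hs : List.Pairwise (· ≤ ·) l)
    (hub : ∀ a ∈ l, a ≤ M) {i j : ℕ} (hij : i ≤ j) : l.getD i M ≤ l.getD j M := by
  rcases lt_or_ge j l.length with hj | hj
  · have hi : i < l.length := lt_of_le_of_lt hij hj
    rw [List.getD_eq_get _ _ ⟨i, hi⟩, List.getD_eq_get _ _ ⟨j, hj⟩]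
    exact hs.rel_get_of_le (by exact hij)
  · rw [List.getD_eq_default _ _ hj]
    rcases lt_or_ge i l.length with hi | hi
    · rw [List.getD_eq_get _ _ ⟨i, hi⟩]
      exact hub _ (l.get_mem _)
    · rw [List.getD_eq_default _ _ hi]

lemma kn_mono {M : ℝ} {x : ℕ → ℕ → ℝ} (hbd : ∀ n : ℕ, ∀ i < n, |x n i| ≤ M) (n : ℕ) :
    Monotone (kn M x n) := by
  intro y z hyz
  have hub : ∀ a ∈ sl x n, a ≤ M := by
    intro a ha
    obtain ⟨i, hi, rfl⟩ := sl_mem ha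
    exact (abs_le.1 (hbd n i hi)).2
  refine getD_mono (sl_sorted x n) hub ?_
  exact Int.toNat_le_toNat (Int.floor_le_floor
    (mul_le_mul_of_nonneg_right hyz (Nat.cast_nonneg n)))

lemma kn_mem {M : ℝ} (hM : 0 < M) {x : ℕ → ℕ → ℝ} (hbd : ∀ n : ℕ, ∀ i < n, |x n i| ≤ M)
    (n : ℕ) (y : ℝ) : kn M x n y ∈ Set.Icc (-M) M := by
  unfold kn
  rcases lt_or_ge (⌊y * n⌋).toNat (sl x n).length with h | h
  · rw [List.getD_eq_get _ _ ⟨_, h⟩]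
    obtain ⟨i, hi, he⟩ := sl_mem ((sl x n).get_mem _)
    rw [← he]
    exact abs_le.1 (hbd n i hi)
  · rw [List.getD_eq_default _ _ h]
    exact ⟨by linarith, le_rfl⟩

lemma kn_eq {M : ℝ} {x : ℕ → ℕ → ℝ} {n i : ℕ} (hi : i < n) {y : ℝ}
    (h1 : (i : ℝ) / n ≤ y) (h2 : y < ((i : ℝ) + 1) / n) :
    kn M x n y = (sl x n).getD i M := by
  have hn : (0:ℝ) < n := by exact_mod_cast Nat.pos_of_ne_zero (by rintro rfl; omega)
  have hfl : ⌊y * n⌋ = (i : ℤ) := by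
    rw [Int.floor_eq_iff]
    constructor
    · push_cast; rw [div_le_iff₀ hn] at h1; linarith
    · push_cast; rw [lt_div_iff₀ hn] at h2; linarith
  simp [kn, hfl]

-- sum over getD of a list equals sum over map
lemma sum_getD (F : ℝ → ℝ) (M : ℝ) (l : List ℝ) :
    ∑ i ∈ Finset.range l.length, F (l.getD i M) = (l.map F).sum := by
  induction l with
  | nil => simp
  | cons a l ih =>
      rw [List.length_cons, Finset.sum_range_succ']
      simp only [List.getD_cons_succ, List.getD_cons_zero, List.map_cons, List.sum_cons, ih]
      ring

lemma sum_sl (F : ℝ → ℝ) (M : ℝ) (x : ℕ → ℕ → ℝ) (n : ℕ)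
    (hl : (Multiset.sort ((Multiset.range n).map (x n)) (· ≤ ·)).length = n) :
    ∑ i ∈ Finset.range n, F ((Multiset.sort ((Multiset.range n).map (x n)) (· ≤ ·)).getD i M)
      = ∑ i ∈ Finset.range n, F (x n i) := by
  set l := Multiset.sort ((Multiset.range n).map (x n)) (· ≤ ·) with hldef
  have h1 : ∑ i ∈ Finset.range n, F (l.getD i M) = (l.map F).sum := by
    rw [← hl]; exact sum_getD F M l
  rw [h1]
  have h2 : (↑l : Multiset ℝ) = (Multiset.range n).map (x n) := Multiset.sort_eq _ _
  have h3 : ((↑l : Multiset ℝ).map F).sum = (l.map F).sum := by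
    simp
  rw [← h3, h2, Multiset.map_map]
  rw [Finset.sum_eq_multiset_sum]
  simp [Finset.range]

lemma sum_sl' (F : ℝ → ℝ) (M : ℝ) (x : ℕ → ℕ → ℝ) (n : ℕ) :
    ∑ i ∈ Finset.range n, F ((sl x n).getD i M) = ∑ i ∈ Finset.range n, F (x n i) := by
  have hl := sl_length x n
  unfold sl at *
  set l := Multiset.sort ((Multiset.range n).map (x n)) (· ≤ ·) with hldef
  have h1 : ∑ i ∈ Finset.range n, F (l.getD i M) = (l.map F).sum := by
    rw [← hl]; exact sum_getD F M l
  rw [h1]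
  have h2 : (↑l : Multiset ℝ) = (Multiset.range n).map (x n) := Multiset.sort_eq _ _
  have h3 : ((↑l : Multiset ℝ).map F).sum = (l.map F).sum := by simp
  rw [← h3, h2, Multiset.map_map, Finset.sum_eq_multiset_sum]
  simp [Finset.range]

lemma Ico_union (n : ℕ) (hn : 0 < n) :
    Set.Ico (0:ℝ) 1 = ⋃ i ∈ Finset.range n, Set.Ico ((i:ℝ)/n) (((i:ℝ)+1)/n) := by
  have hn' : (0:ℝ) < n := by exact_mod_cast hn
  ext y
  simp only [Set.mem_Ico, Set.mem_iUnion, Finset.mem_range]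
  constructor
  · rintro ⟨h0, h1⟩
    have ht0 : 0 ≤ ⌊y * n⌋ := Int.floor_nonneg.2 (by positivity)
    have hcast : ((⌊y * n⌋.toNat : ℕ) : ℝ) = (⌊y * n⌋ : ℝ) := by
      exact_mod_cast congrArg (fun z : ℤ => (z : ℝ)) (Int.toNat_of_nonneg ht0)
    refine ⟨(⌊y * n⌋).toNat, ?_, ?_, ?_⟩
    · have h2 : ⌊y * n⌋ < (n : ℤ) := Int.floor_lt.2 (by push_cast; nlinarith)
      omega
    · rw [hcast, div_le_iff₀ hn']
      exact Int.floor_le _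
    · rw [hcast, lt_div_iff₀ hn']
      have := Int.lt_floor_add_one (y * n)
      linarith
  · rintro ⟨i, hi, h1, h2⟩
    constructor
    · exact le_trans (by positivity) h1
    · calc y < ((i:ℝ)+1)/n := h2
        _ ≤ 1 := by
          rw [div_le_one hn']
          exact_mod_cast Nat.succ_le_of_lt hi

lemma integral_kn (M : ℝ) (x : ℕ → ℕ → ℝ) (F : ℝ → ℝ) {n : ℕ} (hn : 0 < n) :
    ∫ y in Set.Icc (0:ℝ) 1, F (kn M x n y)
      = (1/(n:ℝ)) * ∑ i ∈ Finset.range n, F (x n i) := by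
  have hn' : (0:ℝ) < n := by exact_mod_cast hn
  have hEq : ∀ i ∈ Finset.range n, Set.EqOn (fun y => F (kn M x n y))
      (fun _ => F ((sl x n).getD i M)) (Set.Ico ((i:ℝ)/n) (((i:ℝ)+1)/n)) := by
    intro i hi y hy
    simp only
    rw [kn_eq (Finset.mem_range.1 hi) hy.1 hy.2]
  have hInt : ∀ i ∈ Finset.range n,
      IntegrableOn (fun y => F (kn M x n y)) (Set.Ico ((i:ℝ)/n) (((i:ℝ)+1)/n)) := by
    intro i hi
    rw [integrableOn_congr_fun (hEq i hi) measurableSet_Ico]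
    refine integrableOn_const ?_
    rw [Real.volume_Ico]
    exact ENNReal.ofReal_ne_top
  rw [MeasureTheory.integral_Icc_eq_integral_Ico, Ico_union n hn,
    MeasureTheory.integral_biUnion_finset _ (fun i _ => measurableSet_Ico) ?_ hInt]
  · have : ∀ i ∈ Finset.range n,
        ∫ y in Set.Ico ((i:ℝ)/n) (((i:ℝ)+1)/n), F (kn M x n y)
          = (1/(n:ℝ)) * F ((sl x n).getD i M) := by
      intro i hi
      rw [setIntegral_congr_fun measurableSet_Ico (hEq i hi), setIntegral_const,
        Real.volume_real_Ico_of_le (by gcongr; linarith), smul_eq_mul]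
      congr 1
      field_simp
      ring
    rw [Finset.sum_congr rfl this, ← Finset.mul_sum, sum_sl']
  · intro i hi j hj hij
    have key : ∀ a b : ℕ, a < b →
        Disjoint (Set.Ico ((a:ℝ)/n) (((a:ℝ)+1)/n)) (Set.Ico ((b:ℝ)/n) (((b:ℝ)+1)/n)) := by
      intro a b hab
      rw [Set.Ico_disjoint_Ico]
      refine le_trans (min_le_left _ _) (le_trans ?_ (le_max_right _ _))
      gcongr
      exact_mod_cast Nat.succ_le_of_lt hab
    rcases lt_or_gt_of_ne hij with h | h
    · exact key _ _ h
    · exact (key _ _ h).symm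

end SpectralSym

open SpectralSym


/-- If bounded real numbers `x i n` (for `i < n`) have convergent power
averages for all powers, then their asymptotic distribution is given by a
measurable function `k : [0,1] → [-M,M]`. -/
theorem exists_spectral_symbol_of_moments (M : ℝ) (hM : 0 < M)
    (x : ℕ → ℕ → ℝ) (hbd : ∀ n : ℕ, ∀ i < n, |x n i| ≤ M)
    (hmom : ∀ k : ℕ, ∃ h : ℝ, Tendsto
      (fun n : ℕ => (1 / (n : ℝ)) * ∑ i ∈ Finset.range n, x n i ^ k)
      atTop (nhds h)) :
    ∃ k : ℝ → ℝ, Measurable k ∧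
      (∀ y ∈ Set.Icc (0:ℝ) 1, k y ∈ Set.Icc (-M) M) ∧
      ∀ F : ℝ → ℝ, ContinuousOn F (Set.Icc (-M) M) →
        Tendsto (fun n : ℕ => (1 / (n : ℝ)) * ∑ i ∈ Finset.range n, F (x n i))
          atTop (nhds (∫ y in Set.Icc (0:ℝ) 1, F (k y))) := by
  have hmemIcc : ∀ n y, kn M x n y ∈ Set.Icc (-M) M := fun n y => kn_mem hM hbd n y
  haveI : CompactSpace (Set.Icc (-M) M) := isCompact_iff_compactSpace.mp isCompact_Icc
  obtain ⟨G, φ, hφ, hG⟩ := CompactSpace.tendsto_subseq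
    (fun n (q : ℚ) => (⟨kn M x n (q : ℝ), hmemIcc n q⟩ : Set.Icc (-M) M))
  rw [tendsto_pi_nhds] at hG
  have hGt : ∀ q : ℚ, Tendsto (fun j => kn M x (φ j) (q : ℝ)) atTop (𝓝 (G q : ℝ)) := by
    intro q
    exact (continuous_subtype_val.tendsto (G q)).comp (hG q)
  set S : ℝ → Set ℝ := fun y => (fun q : ℚ => (G q : ℝ)) '' {q : ℚ | y < (q : ℝ)} with hS
  set k : ℝ → ℝ := fun y => sInf (S y) with hkdef
  have hSne : ∀ y, (S y).Nonempty := fun y => by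
    obtain ⟨q, hq⟩ := exists_rat_gt y
    exact ⟨G q, ⟨q, hq, rfl⟩⟩
  have hSbdd : ∀ y, BddBelow (S y) := fun y => ⟨-M, by rintro b ⟨q, hq, rfl⟩; exact (G q).2.1⟩
  have hk_le : ∀ (y : ℝ) (q : ℚ), y < (q : ℝ) → k y ≤ (G q : ℝ) := fun y q hq =>
    csInf_le (hSbdd y) ⟨q, hq, rfl⟩
  have hk_mem : ∀ y, k y ∈ Set.Icc (-M) M := by
    intro y
    obtain ⟨q, hq⟩ := exists_rat_gt y
    exact ⟨le_csInf (hSne y) (by rintro b ⟨q', hq', rfl⟩; exact (G q').2.1),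
      le_trans (hk_le y q hq) (G q).2.2⟩
  have hk_mono : Monotone k := fun y z hyz =>
    csInf_le_csInf (hSbdd y) (hSne z)
      (Set.image_mono (fun q hq => lt_of_le_of_lt hyz hq))
  have hconv : ∀ y : ℝ, ContinuousAt k y →
      Tendsto (fun j => kn M x (φ j) y) atTop (𝓝 (k y)) := by
    intro y hy
    rw [Metric.tendsto_atTop]
    intro ε hε
    obtain ⟨b, ⟨q, hqy, rfl⟩, hb⟩ := exists_lt_of_csInf_lt (hSne y)
      (show sInf (S y) < k y + ε / 2 by change k y < k y + ε / 2; linarith)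
    have h1 : ∀ᶠ w in 𝓝 y, k y - ε / 2 < k w :=
      (hy.tendsto).eventually (eventually_gt_nhds (by linarith))
    obtain ⟨z, hz1, hz2⟩ := ((h1.filter_mono (nhdsWithin_le_nhds (s := Set.Iio y))).and
      (eventually_mem_nhdsWithin (s := Set.Iio y) (a := y))).exists
    obtain ⟨q', hq'1, hq'2⟩ := exists_rat_btwn (show z < y from hz2)
    have hq'k : k z ≤ (G q' : ℝ) := hk_le z q' hq'1
    obtain ⟨N₁, hN₁⟩ := Metric.tendsto_atTop.1 (hGt q) (ε / 2) (by linarith)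
    obtain ⟨N₂, hN₂⟩ := Metric.tendsto_atTop.1 (hGt q') (ε / 2) (by linarith)
    refine ⟨max N₁ N₂, fun j hj => ?_⟩
    have e₁ := hN₁ j (le_trans (le_max_left _ _) hj)
    have e₂ := hN₂ j (le_trans (le_max_right _ _) hj)
    rw [Real.dist_eq, abs_sub_lt_iff] at e₁ e₂ ⊢
    have m₁ : kn M x (φ j) y ≤ kn M x (φ j) (q : ℝ) := kn_mono hbd (φ j) (le_of_lt hqy)
    have m₂ : kn M x (φ j) (q' : ℝ) ≤ kn M x (φ j) y := kn_mono hbd (φ j) (le_of_lt hq'2)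
    constructor
    · linarith [e₁.1]
    · linarith [e₂.2]
  have hmeas_k : Measurable k := hk_mono.measurable
  have hae : ∀ᵐ y ∂(volume.restrict (Set.Icc (0:ℝ) 1)),
      Tendsto (fun j => kn M x (φ j) y) atTop (𝓝 (k y)) := by
    refine ae_restrict_of_ae ?_
    have h0 : volume {y : ℝ | ¬ContinuousAt k y} = 0 :=
      (hk_mono.countable_not_continuousAt).measure_zero _
    rw [ae_iff]
    refine measure_mono_null (fun y hy => ?_) h0
    simp only [Set.mem_setOf_eq] at *
    exact fun hc => hy (hconv y hc)
  haveI hfin : IsFiniteMeasure (volume.restrict (Set.Icc (0:ℝ) 1)) := by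
    constructor
    rw [Measure.restrict_apply_univ, Real.volume_Icc]
    exact ENNReal.ofReal_lt_top
  have hsub : ∀ F : ℝ → ℝ, Continuous F →
      Tendsto (fun j => (1 / (φ j : ℝ)) * ∑ i ∈ Finset.range (φ j), F (x (φ j) i)) atTop
        (𝓝 (∫ y in Set.Icc (0:ℝ) 1, F (k y))) := by
    intro F hF
    obtain ⟨C, hC⟩ := (isCompact_Icc (a := -M) (b := M)).exists_bound_of_continuousOn
      hF.continuousOn
    have hDCT : Tendsto (fun j => ∫ y in Set.Icc (0:ℝ) 1, F (kn M x (φ j) y)) atTop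
        (𝓝 (∫ y in Set.Icc (0:ℝ) 1, F (k y))) := by
      refine tendsto_integral_of_dominated_convergence (fun _ => C) ?_ ?_ ?_ ?_
      · intro j
        exact ((hF.measurable.comp (kn_mono hbd (φ j)).measurable)).aestronglyMeasurable
      · exact integrable_const C
      · intro j
        exact Eventually.of_forall fun y => hC _ (hmemIcc (φ j) y)
      · exact hae.mono fun y hy => ((hF.tendsto (k y)).comp hy)
    refine hDCT.congr' ?_
    filter_upwards [eventually_ge_atTop 1] with j hj
    exact integral_kn M x F (lt_of_lt_of_le hj (hφ.le_apply))
  have hmain : ∀ F : ℝ → ℝ, Continuous F →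
      Tendsto (fun n : ℕ => (1 / (n : ℝ)) * ∑ i ∈ Finset.range n, F (x n i)) atTop
        (𝓝 (∫ y in Set.Icc (0:ℝ) 1, F (k y))) := by
    have hpoly : ∀ p : Polynomial ℝ,
        Tendsto (fun n : ℕ => (1 / (n : ℝ)) * ∑ i ∈ Finset.range n, p.eval (x n i)) atTop
          (𝓝 (∫ y in Set.Icc (0:ℝ) 1, p.eval (k y))) := by
      intro p
      set d := p.natDegree + 1 with hd
      have hrw : ∀ n : ℕ, (1 / (n : ℝ)) * ∑ i ∈ Finset.range n, p.eval (x n i)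
          = ∑ j ∈ Finset.range d, p.coeff j * ((1 / (n : ℝ)) * ∑ i ∈ Finset.range n, x n i ^ j) := by
        intro n
        simp_rw [Polynomial.eval_eq_sum_range, ← hd]
        rw [Finset.sum_comm, Finset.mul_sum]
        refine Finset.sum_congr rfl fun j _ => ?_
        rw [← Finset.mul_sum]
        ring
      have hL : Tendsto
          (fun n : ℕ => ∑ j ∈ Finset.range d, p.coeff j *
            ((1 / (n : ℝ)) * ∑ i ∈ Finset.range n, x n i ^ j)) atTop
          (𝓝 (∑ j ∈ Finset.range d, p.coeff j * (hmom j).choose)) :=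
        tendsto_finset_sum _ fun j _ => ((hmom j).choose_spec).const_mul _
      have hL' : Tendsto (fun n : ℕ => (1 / (n : ℝ)) * ∑ i ∈ Finset.range n, p.eval (x n i))
          atTop (𝓝 (∑ j ∈ Finset.range d, p.coeff j * (hmom j).choose)) := by
        refine hL.congr fun n => (hrw n).symm
      have h1 := hsub (fun t => p.eval t) p.continuous
      have h2 : Tendsto ((fun n : ℕ => (1 / (n : ℝ)) * ∑ i ∈ Finset.range n, p.eval (x n i)) ∘ φ)
          atTop (𝓝 (∑ j ∈ Finset.range d, p.coeff j * (hmom j).choose)) :=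
        hL'.comp hφ.tendsto_atTop
      have hEqL : (∑ j ∈ Finset.range d, p.coeff j * (hmom j).choose)
          = ∫ y in Set.Icc (0:ℝ) 1, p.eval (k y) := tendsto_nhds_unique h2 h1
      rwa [hEqL] at hL'
    intro F hF
    rw [Metric.tendsto_atTop]
    intro ε hε
    obtain ⟨p, hp⟩ := exists_polynomial_near_of_continuousOn (-M) M F hF.continuousOn
      (ε / 4) (by linarith)
    -- bound on the integral difference
    have hintFk : Integrable (fun y => F (k y)) (volume.restrict (Set.Icc (0:ℝ) 1)) := by
      obtain ⟨C, hC⟩ := (isCompact_Icc (a := -M) (b := M)).exists_bound_of_continuousOn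
        hF.continuousOn
      refine (integrable_const C).mono'
        ((hF.measurable.comp hmeas_k)).aestronglyMeasurable ?_
      exact Eventually.of_forall fun y => hC _ (hk_mem y)
    have hintpk : Integrable (fun y => p.eval (k y)) (volume.restrict (Set.Icc (0:ℝ) 1)) := by
      obtain ⟨C, hC⟩ := (isCompact_Icc (a := -M) (b := M)).exists_bound_of_continuousOn
        p.continuous.continuousOn
      refine (integrable_const C).mono'
        ((p.continuous.measurable.comp hmeas_k)).aestronglyMeasurable ?_
      exact Eventually.of_forall fun y => hC _ (hk_mem y)
    have hid : |(∫ y in Set.Icc (0:ℝ) 1, p.eval (k y)) - ∫ y in Set.Icc (0:ℝ) 1, F (k y)| ≤ ε / 4 := by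
      rw [← integral_sub hintpk hintFk]
      have hb : ∀ᵐ y ∂(volume.restrict (Set.Icc (0:ℝ) 1)),
          ‖p.eval (k y) - F (k y)‖ ≤ ε / 4 :=
        Eventually.of_forall fun y => le_of_lt (by
          rw [Real.norm_eq_abs]; exact hp _ (hk_mem y))
      have := norm_integral_le_of_norm_le_const hb
      rw [Real.norm_eq_abs] at this
      refine le_trans this ?_
      rw [measureReal_restrict_apply_univ, Real.volume_real_Icc_of_le (by norm_num)]
      norm_num
    obtain ⟨N, hN⟩ := Metric.tendsto_atTop.1 (hpoly p) (ε / 4) (by linarith)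
    refine ⟨max N 1, fun n hn => ?_⟩
    have hn1 : 1 ≤ n := le_trans (le_max_right _ _) hn
    have hnR : (0:ℝ) < n := by exact_mod_cast hn1
    have hdiff : |(1 / (n : ℝ)) * ∑ i ∈ Finset.range n, p.eval (x n i)
        - (1 / (n : ℝ)) * ∑ i ∈ Finset.range n, F (x n i)| ≤ ε / 4 := by
      rw [← mul_sub, ← Finset.sum_sub_distrib, abs_mul,
        abs_of_nonneg (by positivity : (0:ℝ) ≤ 1 / (n:ℝ))]
      have h1 : |∑ i ∈ Finset.range n, (p.eval (x n i) - F (x n i))|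
          ≤ ∑ i ∈ Finset.range n, |p.eval (x n i) - F (x n i)| :=
        Finset.abs_sum_le_sum_abs _ _
      have h2 : ∑ i ∈ Finset.range n, |p.eval (x n i) - F (x n i)|
          ≤ ∑ _i ∈ Finset.range n, (ε / 4) := by
        refine Finset.sum_le_sum fun i hi => le_of_lt ?_
        exact hp _ (abs_le.1 (hbd n i (Finset.mem_range.1 hi)))
      rw [Finset.sum_const, Finset.card_range, nsmul_eq_mul] at h2
      calc 1 / (n:ℝ) * |∑ i ∈ Finset.range n, (p.eval (x n i) - F (x n i))|
          ≤ 1 / (n:ℝ) * ((n:ℝ) * (ε / 4)) := by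
            refine mul_le_mul_of_nonneg_left (le_trans h1 h2) (by positivity)
        _ = ε / 4 := by field_simp
    have hNp := hN n (le_trans (le_max_left _ _) hn)
    rw [Real.dist_eq] at hNp ⊢
    have : |(1 / (n : ℝ)) * ∑ i ∈ Finset.range n, F (x n i)
        - ∫ y in Set.Icc (0:ℝ) 1, F (k y)| ≤ ε / 4 + ε / 4 + ε / 4 := by
      calc |(1 / (n : ℝ)) * ∑ i ∈ Finset.range n, F (x n i)
          - ∫ y in Set.Icc (0:ℝ) 1, F (k y)|
          ≤ |(1 / (n : ℝ)) * ∑ i ∈ Finset.range n, F (x n i)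
              - (1 / (n : ℝ)) * ∑ i ∈ Finset.range n, p.eval (x n i)|
            + |(1 / (n : ℝ)) * ∑ i ∈ Finset.range n, p.eval (x n i)
              - ∫ y in Set.Icc (0:ℝ) 1, F (k y)| := abs_sub_le _ _ _
        _ ≤ |(1 / (n : ℝ)) * ∑ i ∈ Finset.range n, F (x n i)
              - (1 / (n : ℝ)) * ∑ i ∈ Finset.range n, p.eval (x n i)|
            + (|(1 / (n : ℝ)) * ∑ i ∈ Finset.range n, p.eval (x n i)
              - ∫ y in Set.Icc (0:ℝ) 1, p.eval (k y)|
            + |(∫ y in Set.Icc (0:ℝ) 1, p.eval (k y)) - ∫ y in Set.Icc (0:ℝ) 1, F (k y)|) := by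
              gcongr
              exact abs_sub_le _ _ _
        _ ≤ ε / 4 + ε / 4 + ε / 4 := by
              rw [abs_sub_comm] at hdiff
              have := le_of_lt hNp
              linarith
    linarith
  refine ⟨k, hmeas_k, fun y _ => hk_mem y, ?_⟩
  intro F hF
  set F' : ℝ → ℝ := Set.IccExtend (show -M ≤ M by linarith) ((Set.Icc (-M) M).restrict F)
    with hF'def
  have hF'cont : Continuous F' :=
    continuous_IccExtend_iff.2 (continuousOn_iff_continuous_restrict.mp hF)
  have hagree : ∀ t ∈ Set.Icc (-M) M, F' t = F t := by
    intro t ht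
    rw [hF'def, Set.IccExtend_of_mem _ _ ht]
    rfl
  have hseq : (fun n : ℕ => (1 / (n : ℝ)) * ∑ i ∈ Finset.range n, F (x n i))
      = (fun n : ℕ => (1 / (n : ℝ)) * ∑ i ∈ Finset.range n, F' (x n i)) := by
    funext n
    congr 1
    refine Finset.sum_congr rfl fun i hi => ?_
    rw [hagree _ (abs_le.1 (hbd n i (Finset.mem_range.1 hi)))]
  have hintEq : (∫ y in Set.Icc (0:ℝ) 1, F (k y)) = ∫ y in Set.Icc (0:ℝ) 1, F' (k y) :=
    integral_congr_ae (Eventually.of_forall fun y => (hagree _ (hk_mem y)).symm)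
  rw [hseq, hintEq]
  exact hmain F' hF'cont
end

section
/- Let (A_n) be a sequence of Hermitian matrices A_n ∈ ℂ^{n×n} with operator norms uniformly bounded by M. Then (A_n) admits a spectral symbol (i.e., there exists a measurable f : [0,1] → ℝ with lim_{n→∞} (1/n) ∑_{i=1}^n F(λ_i(A_n)) = ∫₀¹ F(f(x)) dx for all continuous compactly supported F) if and only if lim_{n→∞} (1/n) Tr(A_n^k) exists in ℝ for every k ∈ ℕ. -/
open MeasureTheory Filter


lemma hsm_trace_pow_re {m : ℕ} (B : Matrix (Fin m) (Fin m) ℂ) (hB : B.IsHermitian) (k : ℕ) :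
    ((B ^ k).trace).re = ∑ i, hB.eigenvalues i ^ k := by
  set U : Matrix (Fin m) (Fin m) ℂ := (hB.eigenvectorUnitary : Matrix (Fin m) (Fin m) ℂ)
  have hU1 : U * star U = 1 := (Matrix.mem_unitaryGroup_iff).mp hB.eigenvectorUnitary.2
  have hU2 : star U * U = 1 := (Matrix.mem_unitaryGroup_iff').mp hB.eigenvectorUnitary.2
  set D : Matrix (Fin m) (Fin m) ℂ := Matrix.diagonal (RCLike.ofReal ∘ hB.eigenvalues)
  have hspec : B = U * D * star U := hB.spectral_theorem
  have hpow : B ^ k = U * D ^ k * star U := by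
    induction k with
    | zero => simpa using hU1.symm
    | succ k ih =>
      rw [pow_succ, ih, hspec, pow_succ]
      simp only [Matrix.mul_assoc]
      rw [← Matrix.mul_assoc (star U) U, hU2, Matrix.one_mul]
  rw [hpow, Matrix.trace_mul_cycle, hU2, Matrix.one_mul,
    Matrix.diagonal_pow, Matrix.trace_diagonal]
  simp [← Complex.ofReal_pow]


lemma hsm_exists_lim (M' : ℝ) (lam : (n : ℕ) → Fin n → ℝ)
    (hbd : ∀ n i, lam n i ∈ Set.Icc (-M') M')
    (hmom : ∀ k : ℕ, ∃ L : ℝ,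
      Tendsto (fun n : ℕ => (1 / (n : ℝ)) * ∑ i : Fin n, lam n i ^ k) atTop (nhds L))
    (g : ℝ → ℝ) (hg : Continuous g) :
    ∃ L : ℝ, Tendsto (fun n : ℕ => (1 / (n : ℝ)) * ∑ i : Fin n, g (lam n i)) atTop (nhds L) := by
  choose Lm hLm using hmom
  have hpoly : ∀ p : Polynomial ℝ, ∃ L : ℝ,
      Tendsto (fun n : ℕ => (1 / (n : ℝ)) * ∑ i : Fin n, p.eval (lam n i)) atTop (nhds L) := by
    intro p
    refine ⟨∑ k ∈ Finset.range (p.natDegree + 1), p.coeff k * Lm k, ?_⟩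
    have heq : ∀ n : ℕ, (1 / (n : ℝ)) * ∑ i : Fin n, p.eval (lam n i)
        = ∑ k ∈ Finset.range (p.natDegree + 1),
            p.coeff k * ((1 / (n : ℝ)) * ∑ i : Fin n, lam n i ^ k) := by
      intro n
      simp only [Polynomial.eval_eq_sum_range]
      rw [Finset.sum_comm, Finset.mul_sum]
      refine Finset.sum_congr rfl fun k _ => ?_
      rw [← Finset.mul_sum]
      ring
    rw [show (fun n : ℕ => (1 / (n : ℝ)) * ∑ i : Fin n, p.eval (lam n i))
        = fun n : ℕ => ∑ k ∈ Finset.range (p.natDegree + 1),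
            p.coeff k * ((1 / (n : ℝ)) * ∑ i : Fin n, lam n i ^ k) from funext heq]
    exact tendsto_finset_sum _ fun k _ => (hLm k).const_mul _
  set S : (ℝ → ℝ) → ℕ → ℝ := fun h n => (1 / (n : ℝ)) * ∑ i : Fin n, h (lam n i) with hS
  have hcauchy : CauchySeq (S g) := by
    rw [Metric.cauchySeq_iff]
    intro ε hε
    obtain ⟨p, hp⟩ := exists_polynomial_near_of_continuousOn (-M') M' g hg.continuousOn
      (ε / 4) (by linarith)
    have hnear : ∀ n : ℕ, |S g n - S (fun x => p.eval x) n| ≤ ε / 4 := by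
      intro n
      rcases Nat.eq_zero_or_pos n with h0 | hn
      · subst h0; simp [hS]; linarith
      · have : S g n - S (fun x => p.eval x) n
            = (1 / (n : ℝ)) * ∑ i : Fin n, (g (lam n i) - p.eval (lam n i)) := by
          simp only [hS, Finset.sum_sub_distrib]; ring
        rw [this, abs_mul, abs_of_nonneg (by positivity : (0:ℝ) ≤ 1 / (n:ℝ))]
        calc (1 / (n:ℝ)) * |∑ i : Fin n, (g (lam n i) - p.eval (lam n i))|
            ≤ (1 / (n:ℝ)) * ∑ i : Fin n, |g (lam n i) - p.eval (lam n i)| := by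
              gcongr; exact Finset.abs_sum_le_sum_abs _ _
          _ ≤ (1 / (n:ℝ)) * ∑ _i : Fin n, (ε / 4) := by
              gcongr with i _
              rw [abs_sub_comm]
              exact le_of_lt (hp _ (hbd n i))
          _ = ε / 4 := by
              simp only [Finset.sum_const, Finset.card_univ, Fintype.card_fin, nsmul_eq_mul]
              field_simp
    obtain ⟨Lp, hLp⟩ := hpoly p
    obtain ⟨N, hN⟩ := (Metric.cauchySeq_iff.mp hLp.cauchySeq) (ε / 4) (by linarith)
    refine ⟨N, fun m hm n hn => ?_⟩
    have h1 := hnear m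
    have h2 := hnear n
    have h3 := hN m hm n hn
    rw [Real.dist_eq] at h3 ⊢
    have : S g m - S g n = (S g m - S (fun x => p.eval x) m)
        + (S (fun x => p.eval x) m - S (fun x => p.eval x) n)
        + (S (fun x => p.eval x) n - S g n) := by ring
    rw [this]
    calc |_| ≤ |S g m - S (fun x => p.eval x) m|
        + |S (fun x => p.eval x) m - S (fun x => p.eval x) n|
        + |S (fun x => p.eval x) n - S g n| := abs_add_three _ _ _
      _ < ε := by rw [abs_sub_comm (S (fun x => p.eval x) n)] at *; linarith
  exact cauchySeq_tendsto_of_complete hcauchy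


noncomputable def hsmStep (n : ℕ) (v : Fin n → ℝ) : ℝ → ℝ := fun x =>
  if hn : 0 < n then
    v ⟨min (n - 1) ⌊(n : ℝ) * x⌋₊, lt_of_le_of_lt (Nat.min_le_left _ _) (by omega)⟩
  else 0

lemma hsmStep_monotone {n : ℕ} {v : Fin n → ℝ} (hv : Monotone v) :
    Monotone (hsmStep n v) := by
  intro x y hxy
  unfold hsmStep
  rcases Nat.eq_zero_or_pos n with h0 | hn
  · simp [h0]
  · simp only [dif_pos hn]
    apply hv
    simp only [Fin.mk_le_mk]
    refine min_le_min le_rfl (Nat.floor_mono ?_)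
    have : (0:ℝ) < n := Nat.cast_pos.mpr hn
    nlinarith

lemma hsmStep_mem {n : ℕ} {v : Fin n → ℝ} {M' : ℝ} (hM : 0 ≤ M')
    (hv : ∀ i, v i ∈ Set.Icc (-M') M') (x : ℝ) :
    hsmStep n v x ∈ Set.Icc (-M') M' := by
  unfold hsmStep
  rcases Nat.eq_zero_or_pos n with h0 | hn
  · simp only [h0, lt_irrefl, dite_false]
    exact Set.mem_Icc.mpr ⟨by linarith, hM⟩
  · simp only [dif_pos hn]; exact hv _

lemma hsmStep_val {n : ℕ} (hn : 0 < n) (v : Fin n → ℝ) (i : ℕ) (hi : i < n) {x : ℝ}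
    (hx : x ∈ Set.Ico ((i:ℝ)/n) (((i:ℝ)+1)/n)) : hsmStep n v x = v ⟨i, hi⟩ := by
  have hnpos : (0:ℝ) < n := Nat.cast_pos.mpr hn
  obtain ⟨hx1, hx2⟩ := hx
  have hx0 : 0 ≤ x := le_trans (by positivity) hx1
  have hfloor : ⌊(n:ℝ) * x⌋₊ = i := by
    rw [Nat.floor_eq_iff (by positivity)]
    constructor
    · rw [div_le_iff₀ hnpos] at hx1; linarith
    · rw [lt_div_iff₀ hnpos] at hx2; linarith
  unfold hsmStep
  simp only [dif_pos hn, hfloor]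
  congr 1
  simp only [Fin.mk.injEq]
  omega

lemma hsmStep_integral {n : ℕ} (hn : 0 < n) (v : Fin n → ℝ) (G : ℝ → ℝ) :
    ∫ x in Set.Icc (0:ℝ) 1, G (hsmStep n v x)
      = (1 / (n : ℝ)) * ∑ i : Fin n, G (v i) := by
  have hnpos : (0:ℝ) < n := Nat.cast_pos.mpr hn
  have hIcc : ∫ x in Set.Icc (0:ℝ) 1, G (hsmStep n v x)
      = ∫ x in Set.Ico (0:ℝ) 1, G (hsmStep n v x) :=
    (setIntegral_congr_set Ico_ae_eq_Icc).symm
  have hset : Set.Ico (0:ℝ) 1 = ⋃ i ∈ Finset.range n, Set.Ico ((i:ℝ)/n) (((i:ℝ)+1)/n) := by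
    ext x
    simp only [Set.mem_Ico, Set.mem_iUnion, Finset.mem_range]
    constructor
    · rintro ⟨hx0, hx1⟩
      refine ⟨⌊(n:ℝ) * x⌋₊, ?_, ?_, ?_⟩
      · have h1 : (n:ℝ) * x < n := by nlinarith
        have := Nat.floor_lt (by positivity : (0:ℝ) ≤ (n:ℝ) * x) |>.mpr (by exact_mod_cast h1)
        exact_mod_cast this
      · rw [div_le_iff₀ hnpos, mul_comm]
        exact Nat.floor_le (by positivity)
      · rw [lt_div_iff₀ hnpos, mul_comm]
        exact Nat.lt_floor_add_one _
    · rintro ⟨i, hi, h1, h2⟩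
      constructor
      · have : (0:ℝ) ≤ (i:ℝ)/n := by positivity
        linarith
      · have hile : (i:ℝ) + 1 ≤ n := by exact_mod_cast hi
        have : ((i:ℝ)+1)/n ≤ 1 := by rw [div_le_one hnpos]; exact hile
        linarith
  have hmeas : ∀ i ∈ Finset.range n, MeasurableSet (Set.Ico ((i:ℝ)/n) (((i:ℝ)+1)/n)) :=
    fun i _ => measurableSet_Ico
  have hint : ∀ i ∈ Finset.range n,
      IntegrableOn (fun x => G (hsmStep n v x)) (Set.Ico ((i:ℝ)/n) (((i:ℝ)+1)/n)) := by
    intro i hi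
    have hconst : IntegrableOn (fun _ : ℝ => G (v ⟨i, Finset.mem_range.mp hi⟩))
        (Set.Ico ((i:ℝ)/n) (((i:ℝ)+1)/n)) :=
      integrableOn_const (by rw [Real.volume_Ico]; exact ENNReal.ofReal_ne_top)
    exact hconst.congr_fun
      (fun x hx => (congrArg G (hsmStep_val hn v i (Finset.mem_range.mp hi) hx)).symm)
      measurableSet_Ico
  have hdisj : Set.Pairwise (↑(Finset.range n))
      (Function.onFun Disjoint fun i : ℕ => Set.Ico ((i:ℝ)/n) (((i:ℝ)+1)/n)) := by
    have key : ∀ i j : ℕ, i < j →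
        Disjoint (Set.Ico ((i:ℝ)/n) (((i:ℝ)+1)/n)) (Set.Ico ((j:ℝ)/n) (((j:ℝ)+1)/n)) := by
      intro i j hij
      rw [Set.Ico_disjoint_Ico]
      refine le_trans (min_le_left _ _) (le_trans ?_ (le_max_right _ _))
      have : (i:ℝ) + 1 ≤ j := by exact_mod_cast hij
      gcongr
    intro i _ j _ hij
    rcases hij.lt_or_gt with h | h
    · exact key i j h
    · exact (key j i h).symm
  rw [hIcc, hset, integral_biUnion_finset _ hmeas hdisj hint,
    ← Fin.sum_univ_eq_sum_range
      (fun i => ∫ x in Set.Ico ((i:ℝ)/n) (((i:ℝ)+1)/n), G (hsmStep n v x)),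
    Finset.mul_sum]
  refine Finset.sum_congr rfl fun i _ => ?_
  rw [setIntegral_congr_fun measurableSet_Ico
    (fun x hx => congrArg G (hsmStep_val hn v i i.isLt hx))]
  rw [setIntegral_const, Real.volume_real_Ico, smul_eq_mul]
  have hvol : ((i:ℝ)+1)/n - (i:ℝ)/n = 1/n := by field_simp; ring
  rw [hvol, max_eq_left (by positivity)]


lemma hsm_helly (M' : ℝ) (hM : 0 ≤ M') (u : ℕ → ℝ → ℝ) (humono : ∀ n, Monotone (u n))
    (hubd : ∀ n x, u n x ∈ Set.Icc (-M') M') :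
    ∃ (f : ℝ → ℝ) (φ : ℕ → ℕ), Monotone f ∧ StrictMono φ ∧
      (∀ x, f x ∈ Set.Icc (-M') M') ∧
      ∀ᵐ x : ℝ, Tendsto (fun k => u (φ k) x) atTop (nhds (f x)) := by
  -- compactness in the product space
  set s : Set (ℚ → ℝ) := Set.pi Set.univ (fun _ : ℚ => Set.Icc (-M') M') with hs
  have hscomp : IsCompact s := isCompact_univ_pi fun _ => isCompact_Icc
  have hmem : ∀ n, (fun q : ℚ => u n (q : ℝ)) ∈ s := fun n q _ => hubd n q
  obtain ⟨g, hgs, φ, hφ, hconv⟩ := hscomp.tendsto_subseq hmem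
  have hg : ∀ q : ℚ, Tendsto (fun k => u (φ k) (q : ℝ)) atTop (nhds (g q)) := by
    intro q
    exact (tendsto_pi_nhds.mp hconv) q
  have hgbd : ∀ q : ℚ, g q ∈ Set.Icc (-M') M' := fun q => hgs q (Set.mem_univ q)
  have hgmono : ∀ q r : ℚ, q ≤ r → g q ≤ g r := by
    intro q r hqr
    exact le_of_tendsto_of_tendsto' (hg q) (hg r)
      (fun k => humono (φ k) (by exact_mod_cast hqr))
  -- the limit function
  set T : ℝ → Set ℝ := fun x => insert (-M') ((fun q : ℚ => g q) '' {q : ℚ | (q : ℝ) < x})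
    with hT
  have hTne : ∀ x, (T x).Nonempty := fun x => ⟨-M', Set.mem_insert _ _⟩
  have hTbd : ∀ x, BddAbove (T x) := by
    intro x
    refine ⟨M', fun a ha => ?_⟩
    rcases ha with rfl | ⟨q, _, rfl⟩
    · linarith
    · exact (hgbd q).2
  set f : ℝ → ℝ := fun x => sSup (T x) with hf
  have hfmono : Monotone f := by
    intro x y hxy
    exact csSup_le_csSup (hTbd y) (hTne x)
      (by
        rintro a (rfl | ⟨q, hq, rfl⟩)
        · exact Set.mem_insert _ _
        · exact Set.mem_insert_of_mem _ ⟨q, lt_of_lt_of_le hq hxy, rfl⟩)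
  have hfbd : ∀ x, f x ∈ Set.Icc (-M') M' := by
    intro x
    constructor
    · exact le_csSup (hTbd x) (Set.mem_insert _ _)
    · refine csSup_le (hTne x) ?_
      rintro a (rfl | ⟨q, _, rfl⟩)
      · linarith
      · exact (hgbd q).2
  -- upper bound fact : f z ≤ g q' when z ≤ q'
  have hfle : ∀ (z : ℝ) (q' : ℚ), z ≤ (q' : ℝ) → f z ≤ g q' := by
    intro z q' hzq
    refine csSup_le (hTne z) ?_
    rintro a (rfl | ⟨q, hq, rfl⟩)
    · exact (hgbd q').1
    · refine hgmono q q' ?_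
      exact_mod_cast lt_of_lt_of_le hq hzq |>.le
  have hgle : ∀ (x : ℝ) (q : ℚ), (q : ℝ) < x → g q ≤ f x := by
    intro x q hq
    exact le_csSup (hTbd x) (Set.mem_insert_of_mem _ ⟨q, hq, rfl⟩)
  -- pointwise convergence at continuity points
  have hpt : ∀ x : ℝ, ContinuousAt f x → Tendsto (fun k => u (φ k) x) atTop (nhds (f x)) := by
    intro x hc
    rw [Metric.tendsto_atTop]
    intro ε hε
    obtain ⟨δ, hδ, hδball⟩ := Metric.continuousAt_iff.mp hc (ε / 2) (by linarith)
    -- upper bound eventually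
    obtain ⟨q', hq'1, hq'2⟩ := exists_rat_btwn (show x < x + δ by linarith)
    set z : ℝ := ((q' : ℝ) + (x + δ)) / 2 with hz
    have hq'z : (q' : ℝ) < z := by rw [hz]; linarith
    have hfz : |f z - f x| < ε / 2 := by
      have : dist z x < δ := by
        rw [Real.dist_eq, abs_of_pos (by rw [hz]; linarith)]
        rw [hz]; linarith
      simpa [Real.dist_eq] using hδball this
    have hgq' : g q' ≤ f x + ε / 2 := by
      have h1 : g q' ≤ f z := hgle z q' hq'z
      linarith [abs_lt.mp hfz]
    obtain ⟨N1, hN1⟩ := Metric.tendsto_atTop.mp (hg q') (ε / 2) (by linarith)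
    -- lower bound eventually
    obtain ⟨a, haT, ha⟩ := exists_lt_of_lt_csSup (hTne x) (show f x - ε / 2 < f x by linarith)
    have hlow : ∃ N2, ∀ k ≥ N2, f x - ε < u (φ k) x := by
      rcases haT with rfl | ⟨q, hq, rfl⟩
      · exact ⟨0, fun k _ => lt_of_lt_of_le (by linarith) (hubd (φ k) x).1⟩
      · obtain ⟨N2, hN2⟩ := Metric.tendsto_atTop.mp (hg q) (ε / 2) (by linarith)
        refine ⟨N2, fun k hk => ?_⟩
        have h1 : |u (φ k) (q : ℝ) - g q| < ε / 2 := by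
          simpa [Real.dist_eq] using hN2 k hk
        have h2 : u (φ k) (q : ℝ) ≤ u (φ k) x := humono (φ k) hq.le
        have := abs_lt.mp h1
        linarith
    obtain ⟨N2, hN2⟩ := hlow
    refine ⟨max N1 N2, fun k hk => ?_⟩
    have hk1 := hN1 k (le_trans (le_max_left _ _) hk)
    have hk2 := hN2 k (le_trans (le_max_right _ _) hk)
    have hup : u (φ k) x < f x + ε := by
      have h1 : u (φ k) x ≤ u (φ k) (q' : ℝ) := humono (φ k) hq'1.le
      have h2 := abs_lt.mp (by simpa [Real.dist_eq] using hk1)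
      linarith
    rw [Real.dist_eq, abs_lt]
    constructor <;> linarith
  -- a.e. convergence
  refine ⟨f, φ, hfmono, hφ, hfbd, ?_⟩
  have hcount : Set.Countable {x | ¬ContinuousAt f x} := hfmono.countable_not_continuousAt
  have h0 : (volume : Measure ℝ) {x | ¬ContinuousAt f x} = 0 := hcount.measure_zero _
  rw [ae_iff]
  refine measure_mono_null (fun x hx => ?_) h0
  simp only [Set.mem_setOf_eq] at hx ⊢
  exact fun hcont => hx (hpt x hcont)

/-- A sequence of Hermitian matrices with eigenvalues uniformly bounded by `M`
admits a spectral symbol iff all normalized traces of powers converge. -/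
theorem hermitian_spectral_symbol_iff_trace_moments (M : ℝ)
    (A : (n : ℕ) → Matrix (Fin n) (Fin n) ℂ)
    (hherm : ∀ n, (A n).IsHermitian)
    (hbd : ∀ n, ∀ i : Fin n, |(hherm n).eigenvalues i| ≤ M) :
    (∃ f : ℝ → ℝ, Measurable f ∧
        ∀ F : ℝ → ℝ, Continuous F → HasCompactSupport F →
          Tendsto (fun n : ℕ => (1 / (n : ℝ)) *
              ∑ i : Fin n, F ((hherm n).eigenvalues i))
            atTop (nhds (∫ x in Set.Icc (0:ℝ) 1, F (f x)))) ↔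
      ∀ k : ℕ, ∃ L : ℝ,
        Tendsto (fun n : ℕ => (1 / (n : ℝ)) * ((A n ^ k).trace).re)
          atTop (nhds L) := by
  set lam : (n : ℕ) → Fin n → ℝ := fun n => (hherm n).eigenvalues with hlam
  set M' : ℝ := max M 0 with hM'
  have hM'0 : 0 ≤ M' := le_max_right _ _
  have hbd' : ∀ n i, lam n i ∈ Set.Icc (-M') M' := by
    intro n i
    have h := hbd n i
    have h2 : |lam n i| ≤ M' := le_trans h (le_max_left _ _)
    exact ⟨neg_le_of_abs_le h2, le_of_abs_le h2⟩
  have htr : ∀ (n k : ℕ), ((A n ^ k).trace).re = ∑ i : Fin n, lam n i ^ k := by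
    intro n k
    exact hsm_trace_pow_re (A n) (hherm n) k
  -- clamped power function
  have hclamp : ∀ k : ℕ, ∃ F : ℝ → ℝ, Continuous F ∧ HasCompactSupport F ∧
      ∀ t : ℝ, |t| ≤ M' → F t = t ^ k := by
    intro k
    refine ⟨fun x => (max (-M') (min x M')) ^ k * max 0 (min 1 (M' + 1 - |x|)), ?_, ?_, ?_⟩
    · exact ((continuous_const.max (continuous_id.min continuous_const)).pow k).mul
        (continuous_const.max (continuous_const.min (continuous_const.sub continuous_abs)))
    · refine HasCompactSupport.intro (isCompact_Icc (a := -(M'+1)) (b := M'+1))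
        (fun x hx => ?_)
      have habs : M' + 1 < |x| := by
        simp only [Set.mem_Icc, not_and_or, not_le] at hx
        rcases hx with h | h
        · rw [abs_of_neg (by linarith)]; linarith
        · rw [abs_of_pos (by linarith)]; linarith
      have h1 : min 1 (M' + 1 - |x|) = M' + 1 - |x| := min_eq_right (by linarith)
      have h2 : max 0 (M' + 1 - |x|) = 0 := max_eq_left (by linarith)
      rw [h1, h2, mul_zero]
    · intro t ht
      have h1 : min t M' = t := min_eq_left (le_of_abs_le ht)
      have h2 : max (-M') t = t := max_eq_right (neg_le_of_abs_le ht)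
      have h3 : min 1 (M' + 1 - |t|) = 1 := min_eq_left (by linarith [le_of_abs_le ht])
      have h4 : max (0:ℝ) 1 = 1 := max_eq_right zero_le_one
      simp only []
      rw [h1, h2, h3, h4, mul_one]
  constructor
  · -- forward: spectral symbol implies moment convergence
    rintro ⟨f, _, hF⟩ k
    obtain ⟨F, hFc, hFcs, hFval⟩ := hclamp k
    refine ⟨∫ x in Set.Icc (0:ℝ) 1, F (f x), ?_⟩
    refine (hF F hFc hFcs).congr fun n => ?_
    rw [htr n k]
    congr 1
    exact Finset.sum_congr rfl fun i _ => hFval _ (abs_le.mpr (by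
      have := hbd' n i; exact ⟨by linarith [this.1], this.2⟩))
  · -- backward: moment convergence implies spectral symbol
    intro hmomtr
    have hmom : ∀ k : ℕ, ∃ L : ℝ,
        Tendsto (fun n : ℕ => (1 / (n : ℝ)) * ∑ i : Fin n, lam n i ^ k) atTop (nhds L) := by
      intro k
      obtain ⟨L, hL⟩ := hmomtr k
      exact ⟨L, hL.congr fun n => by rw [htr n k]⟩
    -- sorted eigenvalues and step functions
    set e : (n : ℕ) → Fin n → ℝ := fun n => lam n ∘ Tuple.sort (lam n) with he
    have hemono : ∀ n, Monotone (e n) := fun n => Tuple.monotone_sort (lam n)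
    have hebd : ∀ n i, e n i ∈ Set.Icc (-M') M' := fun n i => hbd' n _
    set u : ℕ → ℝ → ℝ := fun n => hsmStep n (e n) with hu
    have humono : ∀ n, Monotone (u n) := fun n => hsmStep_monotone (hemono n)
    have hubd : ∀ n x, u n x ∈ Set.Icc (-M') M' :=
      fun n x => hsmStep_mem hM'0 (hebd n) x
    obtain ⟨f, φ, hfmono, hφ, hfbd, hae⟩ := hsm_helly M' hM'0 u humono hubd
    refine ⟨f, hfmono.measurable, ?_⟩
    intro F hFc hFcs
    obtain ⟨L, hL⟩ := hsm_exists_lim M' lam hbd' hmom F hFc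
    -- the integral over [0,1] of F ∘ u n equals the normalized eigenvalue sum
    have hstep : ∀ n : ℕ, 0 < n → ∫ x in Set.Icc (0:ℝ) 1, F (u n x)
        = (1 / (n : ℝ)) * ∑ i : Fin n, F (lam n i) := by
      intro n hn
      rw [hu, hsmStep_integral hn (e n) F]
      congr 1
      exact Equiv.sum_comp (Tuple.sort (lam n)) (fun i => F (lam n i))
    -- dominated convergence
    obtain ⟨C, hC⟩ := hFcs.exists_bound_of_continuous hFc
    have hdom : Tendsto (fun k : ℕ => ∫ x in Set.Icc (0:ℝ) 1, F (u (φ k) x)) atTop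
        (nhds (∫ x in Set.Icc (0:ℝ) 1, F (f x))) := by
      refine tendsto_integral_of_dominated_convergence (fun _ => C)
        (fun k => (hFc.measurable.comp (humono (φ k)).measurable).aestronglyMeasurable)
        ?_ (fun k => Eventually.of_forall fun x => hC _) ?_
      · exact integrableOn_const (by rw [Real.volume_Icc]; exact ENNReal.ofReal_ne_top)
      · refine ae_restrict_of_ae ?_
        filter_upwards [hae] with x hx
        exact (hFc.tendsto _).comp hx
    -- identify the limit
    have hLφ : Tendsto (fun k : ℕ => (1 / ((φ k : ℕ) : ℝ)) *
        ∑ i : Fin (φ k), F (lam (φ k) i)) atTop (nhds L) :=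
      hL.comp hφ.tendsto_atTop
    have heq : ∀ᶠ k : ℕ in atTop, (1 / ((φ k : ℕ) : ℝ)) * ∑ i : Fin (φ k), F (lam (φ k) i)
        = ∫ x in Set.Icc (0:ℝ) 1, F (u (φ k) x) := by
      filter_upwards [eventually_ge_atTop 1] with k hk
      exact (hstep (φ k) (lt_of_lt_of_le Nat.one_pos (le_trans hk (hφ.le_apply)))).symm
    have hLeq : L = ∫ x in Set.Icc (0:ℝ) 1, F (f x) :=
      tendsto_nhds_unique (hLφ.congr' heq) hdom
    rw [← hLeq]
    exact hL
end

section
/- Let c > 0 and for each n let λ_{i,n} = c·exp(i x_{i,n}) with x_{i,n} ∈ [−π, π], 1 ≤ i ≤ n. Suppose s_k = lim_{n→∞} (1/n) ∑_{i=1}^n λ_{i,n}^k exists for every k ∈ ℤ, and that ∑_{k∈ℤ} |s_k|/c^k < ∞. Define M(x) = ∑_{k∈ℤ} (s_k/c^k) e^{−ikx}. Then for every continuous F on [−π, π], lim_{n→∞} (1/n) ∑_{i=1}^n F(x_{i,n}) = (1/2π) ∫_{−π}^{π} F(x) M(x) dx. -/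
open MeasureTheory Filter Complex Real

lemma EFAC_int_exp (m : ℤ) :
    (∫ t in Set.Icc (-π:ℝ) π, Complex.exp (Complex.I * (m:ℂ) * (t:ℂ))) =
      if m = 0 then (2*π:ℂ) else 0 := by
  have hle : (-π:ℝ) ≤ π := by linarith [Real.pi_pos]
  rw [MeasureTheory.integral_Icc_eq_integral_Ioc,
    ← intervalIntegral.integral_of_le hle]
  split_ifs with h
  · subst h
    simp only [Int.cast_zero, mul_zero, zero_mul, Complex.exp_zero]
    simp [intervalIntegral.integral_const]
    push_cast
    ring
  · have hm : (m:ℂ) ≠ 0 := Int.cast_ne_zero.mpr h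
    have hc : Complex.I * (m:ℂ) ≠ 0 := mul_ne_zero Complex.I_ne_zero hm
    rw [integral_exp_mul_complex hc]
    have hw2 : Complex.exp (Complex.I * (m:ℂ) * (π:ℝ)) * Complex.exp (Complex.I * (m:ℂ) * (π:ℝ)) = 1 := by
      rw [← Complex.exp_add]
      have : Complex.I * (m:ℂ) * (π:ℝ) + Complex.I * (m:ℂ) * (π:ℝ) = (m:ℂ) * (2*(π:ℝ)*Complex.I) := by
        ring
      rw [this, Complex.exp_int_mul_two_pi_mul_I]
    have hw1 : Complex.exp (Complex.I * (m:ℂ) * (π:ℝ)) * Complex.exp (Complex.I * (m:ℂ) * ((-π:ℝ):ℂ)) = 1 := by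
      rw [← Complex.exp_add]
      have : Complex.I * (m:ℂ) * (π:ℝ) + Complex.I * (m:ℂ) * ((-π:ℝ):ℂ) = 0 := by
        push_cast; ring
      rw [this, Complex.exp_zero]
    have : Complex.exp (Complex.I * (m:ℂ) * ((-π:ℝ):ℂ)) = Complex.exp (Complex.I * (m:ℂ) * (π:ℝ)) :=
      mul_left_cancel₀ (Complex.exp_ne_zero _) (hw1.trans hw2.symm)
    rw [this, sub_self, zero_div]


lemma EFAC_key (x : ℕ → ℕ → ℝ) (C : ℝ) (hC : 0 ≤ C)
    (Mden : ℝ → ℂ) (hMb : ∀ t, ‖Mden t‖ ≤ C)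
    (hMint : IntegrableOn Mden (Set.Icc (-π) π))
    (hmono : ∀ k : ℤ, Tendsto (fun n : ℕ => (1/(n:ℂ)) * ∑ i ∈ Finset.range n,
        Complex.exp (Complex.I * (k:ℂ) * (x n i : ℂ))) atTop
        (nhds ((1/(2*(π:ℂ))) * ∫ t in Set.Icc (-π) π,
          Complex.exp (Complex.I * (k:ℂ) * (t:ℂ)) * Mden t))) :
    ∀ f : C(AddCircle (2*π), ℂ),
      Tendsto (fun n : ℕ => (1/(n:ℂ)) * ∑ i ∈ Finset.range n, f (x n i : ℝ)) atTop
        (nhds ((1/(2*(π:ℂ))) * ∫ t in Set.Icc (-π) π, f (t : ℝ) * Mden t)) := by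
  haveI : Fact (0 < 2*π) := ⟨by linarith [Real.pi_pos]⟩
  set A : ℕ → C(AddCircle (2*π), ℂ) → ℂ :=
    fun n f => (1/(n:ℂ)) * ∑ i ∈ Finset.range n, f (x n i : ℝ) with hA
  set L : C(AddCircle (2*π), ℂ) → ℂ :=
    fun f => (1/(2*(π:ℂ))) * ∫ t in Set.Icc (-π) π, f (t : ℝ) * Mden t with hL
  have hπC : ((2*π : ℝ) : ℂ) ≠ 0 := by
    simp only [ne_eq, Complex.ofReal_eq_zero]
    positivity
  -- integrability
  have hint : ∀ f : C(AddCircle (2*π), ℂ),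
      IntegrableOn (fun t : ℝ => f (t : ℝ) * Mden t) (Set.Icc (-π) π) := by
    intro f
    apply MeasureTheory.Integrable.bdd_mul hMint
    · exact (f.continuous.comp (AddCircle.continuous_mk' (2*π))).aestronglyMeasurable.restrict
    · exact Filter.Eventually.of_forall (fun t => f.norm_coe_le_norm _)
  -- fourier evaluation
  have hfour : ∀ (k : ℤ) (t : ℝ),
      (fourier k : C(AddCircle (2*π), ℂ)) (t : ℝ) = Complex.exp (Complex.I * (k:ℂ) * (t:ℂ)) := by
    intro k t
    rw [fourier_coe_apply]
    congr 1
    rw [div_eq_iff hπC]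
    push_cast
    ring
  -- convergence on the span
  have hspan : ∀ g ∈ Submodule.span ℂ (Set.range (@fourier (2*π))),
      Tendsto (fun n => A n g) atTop (nhds (L g)) := by
    intro g hg
    induction hg using Submodule.span_induction with
    | mem g hg =>
      obtain ⟨k, rfl⟩ := hg
      have h1 : (fun n => A n (fourier k)) = (fun n : ℕ => (1/(n:ℂ)) *
          ∑ i ∈ Finset.range n, Complex.exp (Complex.I * (k:ℂ) * (x n i : ℂ))) := by
        funext n
        simp only [hA]
        congr 1
        exact Finset.sum_congr rfl fun i _ => hfour k _
      have h2 : L (fourier k) = (1/(2*(π:ℂ))) * ∫ t in Set.Icc (-π) π,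
          Complex.exp (Complex.I * (k:ℂ) * (t:ℂ)) * Mden t := by
        simp only [hL]
        congr 1
        exact setIntegral_congr_fun measurableSet_Icc fun t _ => by rw [hfour]
      rw [h1, h2]
      exact hmono k
    | zero => simpa [hA, hL] using tendsto_const_nhds
    | add g g' hg hg' ih ih' =>
      have h1 : (fun n => A n (g + g')) = fun n => A n g + A n g' := by
        funext n
        simp [hA, Finset.sum_add_distrib, mul_add]
      have h2 : L (g + g') = L g + L g' := by
        simp only [hL, ContinuousMap.coe_add, Pi.add_apply, add_mul]
        rw [MeasureTheory.integral_add (hint g) (hint g'), mul_add]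
      rw [h1, h2]
      exact ih.add ih'
    | smul a g hg ih =>
      have h1 : (fun n => A n (a • g)) = fun n => a * A n g := by
        funext n
        simp only [hA, ContinuousMap.coe_smul, Pi.smul_apply, smul_eq_mul, ← Finset.mul_sum]
        ring
      have h2 : L (a • g) = a * L g := by
        simp only [hL, ContinuousMap.coe_smul, Pi.smul_apply, smul_eq_mul]
        rw [show (fun t : ℝ => a * g (t:ℝ) * Mden t) = fun t : ℝ => a * (g (t:ℝ) * Mden t) by
          funext t; ring]
        rw [MeasureTheory.integral_const_mul]
        ring
      rw [h1, h2]
      exact ih.const_mul a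
  -- norm bounds
  have hAb : ∀ (n : ℕ) (f : C(AddCircle (2*π), ℂ)), ‖A n f‖ ≤ ‖f‖ := by
    intro n f
    simp only [hA]
    rw [norm_mul]
    have h1 : ‖∑ i ∈ Finset.range n, f (x n i : ℝ)‖ ≤ n * ‖f‖ := by
      calc ‖∑ i ∈ Finset.range n, f (x n i : ℝ)‖
          ≤ ∑ i ∈ Finset.range n, ‖f (x n i : ℝ)‖ := norm_sum_le _ _
        _ ≤ ∑ _i ∈ Finset.range n, ‖f‖ :=
            Finset.sum_le_sum fun i _ => f.norm_coe_le_norm _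
        _ = n * ‖f‖ := by simp [Finset.sum_const, mul_comm]
    have h2 : ‖(1/(n:ℂ))‖ = 1/(n:ℝ) := by simp [norm_div]
    rw [h2]
    rcases Nat.eq_zero_or_pos n with h | h
    · subst h; simp
    · calc (1/(n:ℝ)) * ‖∑ i ∈ Finset.range n, f (x n i : ℝ)‖
          ≤ (1/(n:ℝ)) * (n * ‖f‖) := by
            apply mul_le_mul_of_nonneg_left h1 (by positivity)
        _ = ‖f‖ := by
            have : (n:ℝ) ≠ 0 := Nat.cast_ne_zero.mpr h.ne'
            field_simp
  have hLb : ∀ f : C(AddCircle (2*π), ℂ), ‖L f‖ ≤ C * ‖f‖ := by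
    intro f
    simp only [hL]
    rw [norm_mul]
    have h2 : ‖(1/(2*(π:ℂ)))‖ = 1/(2*π) := by
      rw [norm_div, norm_one]
      congr 1
      rw [show (2*(π:ℂ)) = ((2*π:ℝ):ℂ) by push_cast; ring, Complex.norm_real,
        Real.norm_eq_abs, abs_of_pos (by positivity : (0:ℝ) < 2*π)]
    rw [h2]
    have hvol : (volume (Set.Icc (-π) π)).toReal = 2*π := by
      rw [Real.volume_Icc, ENNReal.toReal_ofReal (by linarith [Real.pi_pos])]
      ring
    have h3 : ‖∫ t in Set.Icc (-π) π, f (t : ℝ) * Mden t‖ ≤ (‖f‖ * C) * (2*π) := by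
      have h3' : ‖∫ t in Set.Icc (-π) π, f (t : ℝ) * Mden t‖ ≤
          (‖f‖ * C) * (volume (Set.Icc (-π) π)).toReal := by
        apply norm_setIntegral_le_of_norm_le_const
        · rw [Real.volume_Icc]; exact ENNReal.ofReal_lt_top
        · intro t _
          rw [norm_mul]
          exact mul_le_mul (f.norm_coe_le_norm _) (hMb t) (norm_nonneg _) (norm_nonneg _)
      rwa [hvol] at h3' 
    calc (1/(2*π)) * ‖∫ t in Set.Icc (-π) π, f (t : ℝ) * Mden t‖
        ≤ (1/(2*π)) * ((‖f‖ * C) * (2*π)) := by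
          apply mul_le_mul_of_nonneg_left h3 (by positivity)
      _ = C * ‖f‖ := by
          have hπ : (2*π : ℝ) ≠ 0 := by positivity
          field_simp
  -- subtraction rules
  have hAsub : ∀ (n : ℕ) (f g : C(AddCircle (2*π), ℂ)), A n f - A n g = A n (f - g) := by
    intro n f g
    simp [hA, ContinuousMap.coe_sub, Pi.sub_apply, Finset.sum_sub_distrib, mul_sub]
  have hLsub : ∀ f g : C(AddCircle (2*π), ℂ), L f - L g = L (f - g) := by
    intro f g
    simp only [hL, ContinuousMap.coe_sub, Pi.sub_apply, sub_mul]
    rw [MeasureTheory.integral_sub (hint f) (hint g), mul_sub]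
  -- density + ε/3
  intro f
  have hdense : Dense ((Submodule.span ℂ (Set.range (@fourier (2*π))) : Submodule ℂ _) :
      Set C(AddCircle (2*π), ℂ)) := by
    rw [dense_iff_closure_eq, ← Submodule.topologicalClosure_coe,
      span_fourier_closure_eq_top, Submodule.top_coe]
  rw [Metric.tendsto_atTop]
  intro ε hε
  set K : ℝ := max 1 C with hK
  have hK1 : (1:ℝ) ≤ K := le_max_left _ _
  have hKC : C ≤ K := le_max_right _ _
  have hK0 : (0:ℝ) < K := lt_of_lt_of_le one_pos hK1
  have hδ : 0 < ε / (3*K) := by positivity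
  obtain ⟨g, hgS, hgd⟩ := Metric.mem_closure_iff.mp (hdense f) _ hδ
  obtain ⟨N, hN⟩ := Metric.tendsto_atTop.mp (hspan g hgS) _ hδ
  refine ⟨N, fun n hn => ?_⟩
  have t1 : dist (A n f) (A n g) ≤ dist f g := by
    rw [dist_eq_norm, hAsub]
    calc ‖A n (f - g)‖ ≤ ‖f - g‖ := hAb n (f - g)
      _ = dist f g := (dist_eq_norm f g).symm
  have t2 : dist (A n g) (L g) < ε / (3*K) := hN n hn
  have t3 : dist (L g) (L f) ≤ C * dist f g := by
    rw [dist_eq_norm, hLsub]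
    calc ‖L (g - f)‖ ≤ C * ‖g - f‖ := hLb (g - f)
      _ = C * dist f g := by rw [← dist_eq_norm, dist_comm]
  have hd0 : 0 ≤ dist f g := dist_nonneg
  have e1 : dist f g < ε / (3*K) := hgd
  have e2 : ε / (3*K) ≤ ε / 3 := by
    apply div_le_div_of_nonneg_left (le_of_lt hε) (by positivity)
    nlinarith
  have e3 : C * dist f g ≤ K * dist f g := mul_le_mul_of_nonneg_right hKC hd0
  have e4 : K * dist f g < K * (ε / (3*K)) := by
    exact mul_lt_mul_of_pos_left e1 hK0
  have e5 : K * (ε / (3*K)) = ε / 3 := by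
    field_simp
  calc dist (A n f) (L f)
      ≤ dist (A n f) (A n g) + dist (A n g) (L g) + dist (L g) (L f) := dist_triangle4 _ _ _ _
    _ < ε / 3 + ε / 3 + ε / 3 := by
        apply add_lt_add_of_lt_of_le
        apply add_lt_add_of_le_of_lt
        · exact le_trans (le_trans t1 (le_of_lt e1)) e2
        · exact lt_of_lt_of_le t2 e2
        · have : dist (L g) (L f) < ε / 3 := by
            calc dist (L g) (L f) ≤ K * dist f g := le_trans t3 e3
              _ < K * (ε / (3*K)) := e4
              _ = ε / 3 := e5
          exact this.le
    _ = ε := by ring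


lemma EFAC_loc (f : ℝ → ℂ) (C : ℝ) (hb : ∀ t, ‖f t‖ ≤ C)
    (A : Set ℝ) (hA : MeasurableSet A)
    (hsupp : ∀ t ∈ Set.Icc (-π) π, f t ≠ 0 → t ∈ A) :
    ‖∫ t in Set.Icc (-π) π, f t‖ ≤ C * (volume (Set.Icc (-π) π ∩ A)).toReal := by
  rw [setIntegral_eq_of_subset_of_ae_diff_eq_zero measurableSet_Icc.nullMeasurableSet
    Set.inter_subset_left (Filter.Eventually.of_forall (fun t ht => by
      by_contra hne
      exact ht.2 ⟨ht.1, hsupp t ht.1 hne⟩))]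
  exact norm_setIntegral_le_of_norm_le_const (lt_of_le_of_lt (measure_mono Set.inter_subset_left)
      (by rw [Real.volume_Icc]; exact ENNReal.ofReal_lt_top)) (fun t _ => hb t)
/-- If complex numbers `λ_{i,n} = c e^{i x_{i,n}}` of fixed modulus `c` have
convergent power averages `s_k` for all `k ∈ ℤ`, absolutely summable after
rescaling, then the arguments `x_{i,n}` distribute according to the continuous
density `M(x) = ∑_k (s_k/c^k) e^{-ikx}`. -/
theorem ergodic_formula_absolutely_continuous (c : ℝ) (hc : 0 < c)
    (x : ℕ → ℕ → ℝ) (hx : ∀ n : ℕ, ∀ i < n, x n i ∈ Set.Icc (-π) π)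
    (lam : ℕ → ℕ → ℂ)
    (hlam : ∀ n i, lam n i = (c : ℂ) * Complex.exp (Complex.I * (x n i : ℂ)))
    (s : ℤ → ℂ)
    (hs : ∀ k : ℤ, Tendsto
      (fun n : ℕ => (1 / (n : ℂ)) * ∑ i ∈ Finset.range n, lam n i ^ k)
      atTop (nhds (s k)))
    (hsum : Summable (fun k : ℤ => ‖s k‖ / c ^ k))
    (Mden : ℝ → ℂ)
    (hM : ∀ t : ℝ, Mden t = ∑' k : ℤ,
      (s k / (c : ℂ) ^ k) * Complex.exp (-Complex.I * (k : ℂ) * (t : ℂ))) :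
    ∀ F : ℝ → ℂ, ContinuousOn F (Set.Icc (-π) π) →
      Tendsto (fun n : ℕ => (1 / (n : ℂ)) * ∑ i ∈ Finset.range n, F (x n i))
        atTop
        (nhds ((1 / (2 * (π : ℂ))) * ∫ t in Set.Icc (-π) π, F t * Mden t)) := by
  intro F hF
  have hπ : (0:ℝ) < π := Real.pi_pos
  haveI : Fact (0 < 2*π) := ⟨by linarith⟩
  have hπC : ((2*π:ℝ):ℂ) ≠ 0 := by
    simp only [ne_eq, Complex.ofReal_eq_zero]; positivity
  have h2πC : (2*(π:ℂ)) ≠ 0 := by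
    rw [show (2*(π:ℂ)) = ((2*π:ℝ):ℂ) by push_cast; ring]; exact hπC
  have hcC : ((c:ℂ)) ≠ 0 := by exact_mod_cast hc.ne'
  have hck : ∀ k : ℤ, ((c:ℂ))^k ≠ 0 := fun k => zpow_ne_zero k hcC
  -- norms of the series terms
  have hterm : ∀ (k : ℤ) (t : ℝ),
      ‖(s k / (c:ℂ)^k) * Complex.exp (-Complex.I * (k:ℂ) * (t:ℂ))‖
      = ‖s k‖ / c ^ k := by
    intro k t
    rw [norm_mul, norm_div, norm_zpow]
    have h1 : ‖(c:ℂ)‖ = c := by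
      rw [Complex.norm_real, Real.norm_eq_abs, abs_of_pos hc]
    have h2 : ‖Complex.exp (-Complex.I * (k:ℂ) * (t:ℂ))‖ = 1 := by
      rw [show -Complex.I * (k:ℂ) * (t:ℂ) = ((-((k:ℝ)*t) : ℝ) : ℂ) * Complex.I by
        push_cast; ring]
      rw [Complex.norm_exp_ofReal_mul_I]
    rw [h1, h2, mul_one]
  set C : ℝ := ∑' k : ℤ, ‖s k‖ / c ^ k with hCdef
  have hC : 0 ≤ C := tsum_nonneg (fun k => by positivity)
  have hMb : ∀ t, ‖Mden t‖ ≤ C := by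
    intro t
    rw [hM t]
    have hsub : Summable (fun k : ℤ =>
        ‖(s k / (c:ℂ)^k) * Complex.exp (-Complex.I * (k:ℂ) * (t:ℂ))‖) := by
      simpa only [hterm] using hsum
    calc ‖∑' k : ℤ, (s k / (c:ℂ)^k) * Complex.exp (-Complex.I * (k:ℂ) * (t:ℂ))‖
        ≤ ∑' k : ℤ, ‖(s k / (c:ℂ)^k) * Complex.exp (-Complex.I * (k:ℂ) * (t:ℂ))‖ :=
          norm_tsum_le_tsum_norm hsub
      _ = C := by rw [hCdef]; exact tsum_congr (fun k => hterm k t)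
  have hMcont : Continuous Mden := by
    have h1 : Continuous fun t : ℝ =>
        ∑' k : ℤ, (s k / (c:ℂ)^k) * Complex.exp (-Complex.I * (k:ℂ) * (t:ℂ)) := by
      apply continuous_tsum
      · intro k
        apply continuous_const.mul
        exact Complex.continuous_exp.comp (continuous_const.mul Complex.continuous_ofReal)
      · exact hsum
      · exact fun k t => le_of_eq (hterm k t)
    rw [show Mden = fun t : ℝ =>
      ∑' k : ℤ, (s k / (c:ℂ)^k) * Complex.exp (-Complex.I * (k:ℂ) * (t:ℂ)) from funext hM]
    exact h1
  have hMint : IntegrableOn Mden (Set.Icc (-π) π) := hMcont.integrableOn_Icc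
  -- the integral of a monomial against Mden
  have hLmono : ∀ k : ℤ, (1/(2*(π:ℂ))) * (∫ t in Set.Icc (-π) π,
      Complex.exp (Complex.I * (k:ℂ) * (t:ℂ)) * Mden t) = s k / (c:ℂ)^k := by
    intro k
    set Fk : ℤ → ℝ → ℂ := fun j t => Complex.exp (Complex.I * (k:ℂ) * (t:ℂ)) *
      ((s j / (c:ℂ)^j) * Complex.exp (-Complex.I * (j:ℂ) * (t:ℂ))) with hFk
    have hFcont : ∀ j, Continuous (Fk j) := by
      intro j
      apply Continuous.mul
      · exact Complex.continuous_exp.comp (continuous_const.mul Complex.continuous_ofReal)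
      · exact continuous_const.mul
          (Complex.continuous_exp.comp (continuous_const.mul Complex.continuous_ofReal))
    have hFint : ∀ j, Integrable (Fk j) (volume.restrict (Set.Icc (-π) π)) :=
      fun j => (hFcont j).integrableOn_Icc
    have hexpnorm : ∀ t : ℝ, ‖Complex.exp (Complex.I * (k:ℂ) * (t:ℂ))‖ = 1 := by
      intro t
      rw [show Complex.I * (k:ℂ) * (t:ℂ) = (((k:ℝ)*t : ℝ) : ℂ) * Complex.I by push_cast; ring]
      rw [Complex.norm_exp_ofReal_mul_I]
    have hFnorm : ∀ j t, ‖Fk j t‖ = ‖s j‖ / c ^ j := by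
      intro j t
      rw [hFk]
      simp only
      rw [norm_mul, hexpnorm, one_mul, hterm]
    have hFsumint : Summable fun j => ∫ t in Set.Icc (-π) π, ‖Fk j t‖ := by
      have heq : ∀ j, (∫ t in Set.Icc (-π) π, ‖Fk j t‖)
          = (2*π) * (‖s j‖ / c ^ j) := by
        intro j
        rw [show (fun t => ‖Fk j t‖) = fun _ => ‖s j‖ / c ^ j from
          funext (hFnorm j)]
        rw [setIntegral_const, smul_eq_mul, Real.volume_real_Icc_of_le (by linarith)]
        ring_nf
      rw [show (fun j => ∫ t in Set.Icc (-π) π, ‖Fk j t‖)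
        = fun j => (2*π) * (‖s j‖ / c ^ j) from funext heq]
      exact hsum.mul_left (2*π)
    have hswap := MeasureTheory.integral_tsum_of_summable_integral_norm hFint hFsumint
    have hpt : ∀ t : ℝ, ∑' j : ℤ, Fk j t
        = Complex.exp (Complex.I * (k:ℂ) * (t:ℂ)) * Mden t := by
      intro t
      rw [hM t, ← tsum_mul_left]
    have hintj : ∀ j : ℤ, (∫ t in Set.Icc (-π) π, Fk j t)
        = (s j / (c:ℂ)^j) * (if (k - j : ℤ) = 0 then (2*π:ℂ) else 0) := by
      intro j
      have hptj : ∀ t : ℝ, Fk j t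
          = (s j / (c:ℂ)^j) * Complex.exp (Complex.I * ((k - j : ℤ):ℂ) * (t:ℂ)) := by
        intro t
        rw [hFk]
        simp only
        rw [show Complex.exp (Complex.I * (k:ℂ) * (t:ℂ)) *
            ((s j / (c:ℂ)^j) * Complex.exp (-Complex.I * (j:ℂ) * (t:ℂ)))
            = (s j / (c:ℂ)^j) * (Complex.exp (Complex.I * (k:ℂ) * (t:ℂ)) *
              Complex.exp (-Complex.I * (j:ℂ) * (t:ℂ))) by ring]
        congr 1
        rw [← Complex.exp_add]
        congr 1
        push_cast
        ring
      rw [setIntegral_congr_fun measurableSet_Icc (fun t _ => hptj t),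
        MeasureTheory.integral_const_mul, EFAC_int_exp]
    have htsum : ∑' j : ℤ, (∫ t in Set.Icc (-π) π, Fk j t)
        = (s k / (c:ℂ)^k) * (2*π:ℂ) := by
      calc ∑' j : ℤ, (∫ t in Set.Icc (-π) π, Fk j t)
          = ∑' j : ℤ, (s j / (c:ℂ)^j) * (if (k - j : ℤ) = 0 then (2*π:ℂ) else 0) :=
            tsum_congr hintj
        _ = (s k / (c:ℂ)^k) * (2*π:ℂ) := by
            rw [tsum_eq_single k (fun j hj => by
              rw [if_neg (sub_ne_zero.mpr (Ne.symm hj)), mul_zero])]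
            rw [if_pos (sub_self k)]
    have hfinal : (∫ t in Set.Icc (-π) π,
        Complex.exp (Complex.I * (k:ℂ) * (t:ℂ)) * Mden t) = (s k / (c:ℂ)^k) * (2*π:ℂ) := by
      rw [← setIntegral_congr_fun measurableSet_Icc (fun t _ => hpt t), ← hswap, htsum]
    rw [hfinal]
    field_simp
  -- averages of monomials
  have hmono : ∀ k : ℤ, Tendsto (fun n : ℕ => (1/(n:ℂ)) * ∑ i ∈ Finset.range n,
      Complex.exp (Complex.I * (k:ℂ) * ((x n i : ℝ):ℂ))) atTop
      (nhds ((1/(2*(π:ℂ))) * ∫ t in Set.Icc (-π) π,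
        Complex.exp (Complex.I * (k:ℂ) * (t:ℂ)) * Mden t)) := by
    intro k
    rw [hLmono k]
    have hlamk : ∀ n i, Complex.exp (Complex.I * (k:ℂ) * ((x n i : ℝ):ℂ))
        = lam n i ^ k / (c:ℂ)^k := by
      intro n i
      rw [hlam n i, mul_zpow, mul_comm ((c:ℂ)^k), mul_div_assoc, div_self (hck k), mul_one,
        ← Complex.exp_int_mul]
      congr 1
      ring
    have heq : (fun n : ℕ => (1/(n:ℂ)) * ∑ i ∈ Finset.range n,
        Complex.exp (Complex.I * (k:ℂ) * ((x n i : ℝ):ℂ)))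
        = fun n : ℕ => ((c:ℂ)^k)⁻¹ * ((1/(n:ℂ)) * ∑ i ∈ Finset.range n, lam n i ^ k) := by
      funext n
      rw [Finset.sum_congr rfl (fun i _ => hlamk n i)]
      rw [← Finset.sum_div]
      field_simp
    rw [heq]
    have := (hs k).const_mul ((c:ℂ)^k)⁻¹
    simpa [div_eq_mul_inv, mul_comm] using this
  have KEY := EFAC_key x C hC Mden hMb hMint hmono
  -- ====== seam argument ======
  rw [Metric.tendsto_atTop]
  intro ε hε
  set Δ : ℂ := F π - F (-π) with hΔdef
  set B : ℝ := ‖Δ‖ + 1 with hBdef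
  have hB0 : (0:ℝ) < B := by positivity
  have hBΔ : ‖Δ‖ ≤ B := by simp [hBdef]
  set Q : ℝ := B * (C + 1) with hQdef
  have hQ0 : (0:ℝ) < Q := by positivity
  set δ : ℝ := min π (ε / (16 * Q)) with hδdef
  have hδ0 : (0:ℝ) < δ := lt_min hπ (by positivity)
  have hδπ : δ ≤ π := min_le_left _ _
  have hδε : δ ≤ ε / (16 * Q) := min_le_right _ _
  -- bump functions
  set η : ℝ → ℝ := fun t => max 0 (min 1 ((t - (π - δ))/δ)) with hηdef
  set ψ : ℝ → ℝ := fun t => max 0 (min 1 ((|t| - (π - 2*δ))/δ)) with hψdef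
  have hηcont : Continuous η :=
    continuous_const.max (continuous_const.min
      ((continuous_id.sub continuous_const).div_const δ))
  have hψcont : Continuous ψ :=
    continuous_const.max (continuous_const.min
      ((_root_.continuous_abs.sub continuous_const).div_const δ))
  have hη0 : ∀ t, 0 ≤ η t := fun t => le_max_left _ _
  have hη1 : ∀ t, η t ≤ 1 := fun t => max_le zero_le_one (min_le_left _ _)
  have hψ0 : ∀ t, 0 ≤ ψ t := fun t => le_max_left _ _
  have hψ1 : ∀ t, ψ t ≤ 1 := fun t => max_le zero_le_one (min_le_left _ _)
  have hηmπ : η (-π) = 0 := by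
    have h1 : (-π - (π - δ))/δ ≤ 0 :=
      div_nonpos_of_nonpos_of_nonneg (by linarith) hδ0.le
    simp only [hηdef]
    exact max_eq_left ((min_le_right _ _).trans h1)
  have hηπ : η π = 1 := by
    have h1 : (π - (π - δ))/δ = 1 := by field_simp; ring
    simp only [hηdef, h1, min_self]
    exact max_eq_right zero_le_one
  have hψval1 : ∀ t : ℝ, π - δ ≤ |t| → ψ t = 1 := by
    intro t ht
    have h1 : (1:ℝ) ≤ (|t| - (π - 2*δ))/δ := by
      rw [le_div_iff₀ hδ0]; linarith
    simp only [hψdef]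
    rw [min_eq_left h1, max_eq_right zero_le_one]
  have hψπ : ψ π = 1 := hψval1 π (by rw [_root_.abs_of_pos hπ]; linarith)
  have hψmπ : ψ (-π) = 1 := hψval1 (-π) (by rw [_root_.abs_neg, _root_.abs_of_pos hπ]; linarith)
  have hηψ : ∀ t, η t ≤ ψ t := by
    intro t
    rcases le_or_gt t (π - δ) with h | h
    · have h1 : (t - (π - δ))/δ ≤ 0 :=
        div_nonpos_of_nonpos_of_nonneg (by linarith) hδ0.le
      have h2 : η t = 0 := max_eq_left ((min_le_right _ _).trans h1)
      rw [h2]; exact hψ0 t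
    · have h2 : ψ t = 1 := hψval1 t (le_trans (by linarith) (_root_.le_abs_self t))
      rw [h2]; exact hη1 t
  have hηsupp : ∀ t : ℝ, η t ≠ 0 → π - δ ≤ t := by
    intro t h
    by_contra hcon
    push_neg at hcon
    exact h (max_eq_left ((min_le_right _ _).trans
      (div_nonpos_of_nonpos_of_nonneg (by linarith) hδ0.le)))
  have hψsupp : ∀ t : ℝ, ψ t ≠ 0 → π - 2*δ ≤ |t| := by
    intro t h
    by_contra hcon
    push_neg at hcon
    exact h (max_eq_left ((min_le_right _ _).trans
      (div_nonpos_of_nonpos_of_nonneg (by linarith) hδ0.le)))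
  -- periodic modification G of F
  set G : ℝ → ℂ := fun t => F t - Δ * ((η t : ℝ) : ℂ) with hGdef
  have hGcont : ContinuousOn G (Set.Icc (-π) π) :=
    hF.sub (continuous_const.mul (Complex.continuous_ofReal.comp hηcont)).continuousOn
  have hGend : G (-π) = G π := by
    simp only [hGdef, hηmπ, hηπ, hΔdef]
    push_cast
    ring
  have haddp : (-π) + 2*π = π := by ring
  have hmkIco : ∀ t : ℝ, t ∈ Set.Ico (-π) π → t ∈ Set.Ico (-π) (-π + 2*π) :=
    fun t ht => ⟨ht.1, by rw [haddp]; exact ht.2⟩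
  have hcoeπ : ((π : ℝ) : AddCircle (2*π)) = ((-π : ℝ) : AddCircle (2*π)) := by
    have h := AddCircle.coe_add_period (2*π) (-π)
    rw [show (-π) + 2*π = π by ring] at h
    exact h
  have hliftIcc : ∀ (W : ℝ → ℂ), W (-π) = W π → ∀ t ∈ Set.Icc (-π) π,
      AddCircle.liftIco (2*π) (-π) W ((t : ℝ) : AddCircle (2*π)) = W t := by
    intro W hW t ht
    rcases lt_or_eq_of_le ht.2 with h | h
    · exact AddCircle.liftIco_coe_apply (hmkIco t ⟨ht.1, h⟩)
    · rw [h, hcoeπ,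
        AddCircle.liftIco_coe_apply (hmkIco (-π) ⟨le_refl _, by linarith⟩), hW]
  set gG : C(AddCircle (2*π), ℂ) :=
    ⟨AddCircle.liftIco (2*π) (-π) G, AddCircle.liftIco_continuous
      (by rw [haddp]; exact hGend) (by rw [haddp]; exact hGcont)⟩ with hgGdef
  set ψC : ℝ → ℂ := fun t => ((ψ t : ℝ) : ℂ) with hψCdef
  have hψCend : ψC (-π) = ψC π := by
    simp only [hψCdef, hψmπ, hψπ]
  set gψ : C(AddCircle (2*π), ℂ) :=
    ⟨AddCircle.liftIco (2*π) (-π) ψC, AddCircle.liftIco_continuous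
      (by rw [haddp]; exact hψCend)
      (by rw [haddp]; exact (Complex.continuous_ofReal.comp hψcont).continuousOn)⟩ with hgψdef
  -- convergence for G and ψ
  have TG : Tendsto (fun n : ℕ => (1/(n:ℂ)) * ∑ i ∈ Finset.range n, G (x n i)) atTop
      (nhds ((1/(2*(π:ℂ))) * ∫ t in Set.Icc (-π) π, G t * Mden t)) := by
    have h1 := KEY gG
    have h2 : (fun n : ℕ => (1/(n:ℂ)) * ∑ i ∈ Finset.range n,
        gG ((x n i : ℝ) : AddCircle (2*π)))
        = fun n : ℕ => (1/(n:ℂ)) * ∑ i ∈ Finset.range n, G (x n i) := by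
      funext n
      congr 1
      exact Finset.sum_congr rfl fun i hi =>
        hliftIcc G hGend _ (hx n i (Finset.mem_range.mp hi))
    have h3 : (∫ t in Set.Icc (-π) π, gG ((t : ℝ) : AddCircle (2*π)) * Mden t)
        = ∫ t in Set.Icc (-π) π, G t * Mden t :=
      setIntegral_congr_fun measurableSet_Icc fun t ht => by
        rw [show gG ((t:ℝ) : AddCircle (2*π)) = G t from hliftIcc G hGend t ht]
    rw [h2, h3] at h1
    exact h1
  have Tψ : Tendsto (fun n : ℕ => (1/(n:ℂ)) * ∑ i ∈ Finset.range n, ψC (x n i)) atTop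
      (nhds ((1/(2*(π:ℂ))) * ∫ t in Set.Icc (-π) π, ψC t * Mden t)) := by
    have h1 := KEY gψ
    have h2 : (fun n : ℕ => (1/(n:ℂ)) * ∑ i ∈ Finset.range n,
        gψ ((x n i : ℝ) : AddCircle (2*π)))
        = fun n : ℕ => (1/(n:ℂ)) * ∑ i ∈ Finset.range n, ψC (x n i) := by
      funext n
      congr 1
      exact Finset.sum_congr rfl fun i hi =>
        hliftIcc ψC hψCend _ (hx n i (Finset.mem_range.mp hi))
    have h3 : (∫ t in Set.Icc (-π) π, gψ ((t : ℝ) : AddCircle (2*π)) * Mden t)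
        = ∫ t in Set.Icc (-π) π, ψC t * Mden t :=
      setIntegral_congr_fun measurableSet_Icc fun t ht => by
        rw [show gψ ((t:ℝ) : AddCircle (2*π)) = ψC t from hliftIcc ψC hψCend t ht]
    rw [h2, h3] at h1
    exact h1
  -- norm of 1/(2π)
  have hn2π : ‖(1/(2*(π:ℂ)))‖ = 1/(2*π) := by
    rw [norm_div, norm_one]
    congr 1
    rw [show (2*(π:ℂ)) = ((2*π:ℝ):ℂ) by push_cast; ring, Complex.norm_real,
      Real.norm_eq_abs, _root_.abs_of_pos (by positivity)]
  have hn2π1 : ‖(1/(2*(π:ℂ)))‖ ≤ 1 := by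
    rw [hn2π, div_le_one (by positivity)]
    linarith [Real.pi_gt_three]
  -- localized integral bounds
  have hLψbound : ‖∫ t in Set.Icc (-π) π, ψC t * Mden t‖ ≤ C * (4*δ) := by
    have hnormψC : ∀ t, ‖ψC t‖ ≤ 1 := by
      intro t
      simp only [hψCdef]
      rw [Complex.norm_real, Real.norm_eq_abs, _root_.abs_of_nonneg (hψ0 t)]
      exact hψ1 t
    have hb : ∀ t, ‖ψC t * Mden t‖ ≤ C := by
      intro t
      rw [norm_mul]
      calc ‖ψC t‖ * ‖Mden t‖ ≤ 1 * C :=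
            mul_le_mul (hnormψC t) (hMb t) (norm_nonneg _) zero_le_one
        _ = C := one_mul C
    set A : Set ℝ := Set.Icc (-π) (-π + 2*δ) ∪ Set.Icc (π - 2*δ) π with hAdef
    have hA : MeasurableSet A := measurableSet_Icc.union measurableSet_Icc
    have hsupp : ∀ t ∈ Set.Icc (-π) π, ψC t * Mden t ≠ 0 → t ∈ A := by
      intro t ht hne
      have hψne : ψ t ≠ 0 := by
        intro h0
        apply hne
        simp only [hψCdef, h0]
        push_cast
        ring
      have h1 := hψsupp t hψne
      rcases le_or_gt 0 t with h | h
      · right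
        rw [_root_.abs_of_nonneg h] at h1
        exact ⟨by linarith, ht.2⟩
      · left
        rw [_root_.abs_of_neg h] at h1
        exact ⟨ht.1, by linarith⟩
    have hloc := EFAC_loc (fun t => ψC t * Mden t) C hb A hA hsupp
    have hvol : (volume (Set.Icc (-π) π ∩ A)).toReal ≤ 4*δ := by
      have h1 : volume A ≤ ENNReal.ofReal (2*δ) + ENNReal.ofReal (2*δ) := by
        refine le_trans (measure_union_le _ _) ?_
        rw [Real.volume_Icc, Real.volume_Icc,
          show -π + 2*δ - (-π) = 2*δ by ring, show π - (π - 2*δ) = 2*δ by ring]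
      have h2 : volume (Set.Icc (-π) π ∩ A) ≤ ENNReal.ofReal (4*δ) := by
        refine le_trans (measure_mono Set.inter_subset_right) (le_trans h1 ?_)
        rw [← ENNReal.ofReal_add (by positivity) (by positivity)]
        exact le_of_eq (by ring_nf)
      calc (volume (Set.Icc (-π) π ∩ A)).toReal
          ≤ (ENNReal.ofReal (4*δ)).toReal :=
            ENNReal.toReal_mono ENNReal.ofReal_ne_top h2
        _ = 4*δ := ENNReal.toReal_ofReal (by positivity)
    exact le_trans hloc (mul_le_mul_of_nonneg_left hvol hC)
  have hLηbound : ‖∫ t in Set.Icc (-π) π, ((η t : ℝ):ℂ) * Mden t‖ ≤ C * δ := by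
    have hb : ∀ t, ‖((η t : ℝ):ℂ) * Mden t‖ ≤ C := by
      intro t
      rw [norm_mul]
      have h1 : ‖((η t : ℝ):ℂ)‖ ≤ 1 := by
        rw [Complex.norm_real, Real.norm_eq_abs, _root_.abs_of_nonneg (hη0 t)]
        exact hη1 t
      calc ‖((η t : ℝ):ℂ)‖ * ‖Mden t‖ ≤ 1 * C :=
            mul_le_mul h1 (hMb t) (norm_nonneg _) zero_le_one
        _ = C := one_mul C
    have hsupp : ∀ t ∈ Set.Icc (-π) π, ((η t : ℝ):ℂ) * Mden t ≠ 0 →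
        t ∈ Set.Icc (π - δ) π := by
      intro t ht hne
      have hηne : η t ≠ 0 := by
        intro h0
        apply hne
        simp only [h0]
        push_cast
        ring
      exact ⟨hηsupp t hηne, ht.2⟩
    have hloc := EFAC_loc (fun t => ((η t : ℝ):ℂ) * Mden t) C hb
      (Set.Icc (π - δ) π) measurableSet_Icc hsupp
    have hvol : (volume (Set.Icc (-π) π ∩ Set.Icc (π - δ) π)).toReal ≤ δ := by
      have h2 : volume (Set.Icc (-π) π ∩ Set.Icc (π - δ) π) ≤ ENNReal.ofReal δ := by
        refine le_trans (measure_mono Set.inter_subset_right) ?_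
        rw [Real.volume_Icc, show π - (π - δ) = δ by ring]
      calc (volume (Set.Icc (-π) π ∩ Set.Icc (π - δ) π)).toReal
          ≤ (ENNReal.ofReal δ).toReal := ENNReal.toReal_mono ENNReal.ofReal_ne_top h2
        _ = δ := ENNReal.toReal_ofReal hδ0.le
    exact le_trans hloc (mul_le_mul_of_nonneg_left hvol hC)
  -- choose N
  obtain ⟨N1, hN1⟩ := Metric.tendsto_atTop.mp TG (ε/2) (by positivity)
  obtain ⟨N2, hN2⟩ := Metric.tendsto_atTop.mp Tψ δ hδ0
  refine ⟨max N1 N2, fun n hn => ?_⟩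
  have hn1 : n ≥ N1 := le_trans (le_max_left _ _) hn
  have hn2 : n ≥ N2 := le_trans (le_max_right _ _) hn
  -- decomposition
  have hFdec : ∀ t : ℝ, F t = G t + Δ * ((η t : ℝ):ℂ) := by
    intro t
    simp only [hGdef]
    ring
  have hsumdec : (1/(n:ℂ)) * ∑ i ∈ Finset.range n, F (x n i)
      = (1/(n:ℂ)) * ∑ i ∈ Finset.range n, G (x n i)
        + Δ * ((1/(n:ℂ)) * ∑ i ∈ Finset.range n, ((η (x n i) : ℝ):ℂ)) := by
    rw [Finset.sum_congr rfl (fun i _ => hFdec (x n i)), Finset.sum_add_distrib, mul_add]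
    congr 1
    rw [← Finset.mul_sum]
    ring
  have hηMint : IntegrableOn (fun t => ((η t : ℝ):ℂ) * Mden t) (Set.Icc (-π) π) :=
    ((Complex.continuous_ofReal.comp hηcont).mul hMcont).integrableOn_Icc
  have hGMint : IntegrableOn (fun t => G t * Mden t) (Set.Icc (-π) π) :=
    (hGcont.mul hMcont.continuousOn).integrableOn_Icc
  have hintdec : (∫ t in Set.Icc (-π) π, F t * Mden t)
      = (∫ t in Set.Icc (-π) π, G t * Mden t)
        + Δ * ∫ t in Set.Icc (-π) π, ((η t : ℝ):ℂ) * Mden t := by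
    have hpt : ∀ t ∈ Set.Icc (-π) π,
        F t * Mden t = G t * Mden t + Δ * (((η t : ℝ):ℂ) * Mden t) := by
      intro t _
      rw [hFdec t]
      ring
    rw [setIntegral_congr_fun measurableSet_Icc hpt,
      MeasureTheory.integral_add hGMint (hηMint.const_mul Δ),
      MeasureTheory.integral_const_mul]
  -- average of η is small
  have hηavg : ‖(1/(n:ℂ)) * ∑ i ∈ Finset.range n, ((η (x n i) : ℝ):ℂ)‖
      ≤ C * (4*δ) + δ := by
    have havg : ∀ (h : ℝ → ℝ), (1/(n:ℂ)) * ∑ i ∈ Finset.range n, ((h (x n i) : ℝ):ℂ)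
        = (((1/(n:ℝ)) * ∑ i ∈ Finset.range n, h (x n i) : ℝ) : ℂ) := by
      intro h
      push_cast
      ring
    have hψCsum : (1/(n:ℂ)) * ∑ i ∈ Finset.range n, ψC (x n i)
        = (((1/(n:ℝ)) * ∑ i ∈ Finset.range n, ψ (x n i) : ℝ) : ℂ) := by
      simp only [hψCdef]
      exact havg ψ
    have hψavgval : (1/(n:ℝ)) * ∑ i ∈ Finset.range n, ψ (x n i) ≤ C * (4*δ) + δ := by
      have hdist := hN2 n hn2
      have hnn : 0 ≤ (1/(n:ℝ)) * ∑ i ∈ Finset.range n, ψ (x n i) := by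
        apply mul_nonneg (by positivity)
        exact Finset.sum_nonneg fun i _ => hψ0 _
      have h1 : (1/(n:ℝ)) * ∑ i ∈ Finset.range n, ψ (x n i)
          = ‖(1/(n:ℂ)) * ∑ i ∈ Finset.range n, ψC (x n i)‖ := by
        rw [hψCsum, Complex.norm_real, Real.norm_eq_abs, _root_.abs_of_nonneg hnn]
      set a : ℂ := (1/(n:ℂ)) * ∑ i ∈ Finset.range n, ψC (x n i) with ha
      set L : ℂ := (1/(2*(π:ℂ))) * ∫ t in Set.Icc (-π) π, ψC t * Mden t with hL
      have h2 : ‖a‖ ≤ ‖L‖ + dist a L := by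
        rw [dist_eq_norm]
        calc ‖a‖ = ‖L + (a - L)‖ := by ring_nf
          _ ≤ ‖L‖ + ‖a - L‖ := norm_add_le _ _
      have h3 : ‖L‖ ≤ C * (4*δ) := by
        rw [hL, norm_mul]
        calc ‖(1/(2*(π:ℂ)))‖ * ‖∫ t in Set.Icc (-π) π, ψC t * Mden t‖
            ≤ 1 * (C * (4*δ)) :=
              mul_le_mul hn2π1 hLψbound (norm_nonneg _) zero_le_one
          _ = C * (4*δ) := one_mul _
      rw [h1]
      calc ‖a‖ ≤ ‖L‖ + dist a L := h2
        _ ≤ C * (4*δ) + δ := add_le_add h3 (le_of_lt hdist)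
    have hmono' : (1/(n:ℝ)) * ∑ i ∈ Finset.range n, η (x n i)
        ≤ (1/(n:ℝ)) * ∑ i ∈ Finset.range n, ψ (x n i) :=
      mul_le_mul_of_nonneg_left (Finset.sum_le_sum fun i _ => hηψ _) (by positivity)
    have hnnη : 0 ≤ (1/(n:ℝ)) * ∑ i ∈ Finset.range n, η (x n i) := by
      apply mul_nonneg (by positivity)
      exact Finset.sum_nonneg fun i _ => hη0 _
    rw [havg η, Complex.norm_real, Real.norm_eq_abs, _root_.abs_of_nonneg hnnη]
    linarith
  -- final estimate
  have hLηnorm : ‖Δ * ((1/(2*(π:ℂ))) * ∫ t in Set.Icc (-π) π, ((η t : ℝ):ℂ) * Mden t)‖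
      ≤ B * (C * δ) := by
    rw [norm_mul, norm_mul]
    calc ‖Δ‖ * (‖(1/(2*(π:ℂ)))‖ * ‖∫ t in Set.Icc (-π) π, ((η t : ℝ):ℂ) * Mden t‖)
        ≤ B * (1 * (C * δ)) := by
          apply mul_le_mul hBΔ _ (by positivity) hB0.le
          exact mul_le_mul hn2π1 hLηbound (norm_nonneg _) zero_le_one
      _ = B * (C * δ) := by ring
  have hηavgnorm : ‖Δ * ((1/(n:ℂ)) * ∑ i ∈ Finset.range n, ((η (x n i) : ℝ):ℂ))‖
      ≤ B * (C * (4*δ) + δ) := by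
    rw [norm_mul]
    exact mul_le_mul hBΔ hηavg (norm_nonneg _) hB0.le
  have hGdist : ‖((1/(n:ℂ)) * ∑ i ∈ Finset.range n, G (x n i))
      - (1/(2*(π:ℂ))) * ∫ t in Set.Icc (-π) π, G t * Mden t‖ < ε/2 := by
    rw [← dist_eq_norm]
    exact hN1 n hn1
  have hQδ : Q * δ ≤ ε/16 := by
    calc Q * δ ≤ Q * (ε / (16 * Q)) := mul_le_mul_of_nonneg_left hδε hQ0.le
      _ = ε/16 := by field_simp
  have hCfact : B * (C * (4*δ) + δ) + B * (C * δ) ≤ 6 * (Q * δ) := by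
    have expand : B * (C * (4*δ) + δ) + B * (C * δ) = B * δ * (5*C + 1) := by ring
    have expand2 : 6 * (Q * δ) = B * δ * (6*C + 6) := by rw [hQdef]; ring
    rw [expand, expand2]
    apply mul_le_mul_of_nonneg_left (by linarith) (by positivity)
  have hdecomp : ((1/(n:ℂ)) * ∑ i ∈ Finset.range n, G (x n i)
        + Δ * ((1/(n:ℂ)) * ∑ i ∈ Finset.range n, ((η (x n i) : ℝ):ℂ)))
      - (1/(2*(π:ℂ))) * ((∫ t in Set.Icc (-π) π, G t * Mden t)
        + Δ * ∫ t in Set.Icc (-π) π, ((η t : ℝ):ℂ) * Mden t)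
      = (((1/(n:ℂ)) * ∑ i ∈ Finset.range n, G (x n i))
          - (1/(2*(π:ℂ))) * ∫ t in Set.Icc (-π) π, G t * Mden t)
        + (Δ * ((1/(n:ℂ)) * ∑ i ∈ Finset.range n, ((η (x n i) : ℝ):ℂ)))
        - (Δ * ((1/(2*(π:ℂ))) * ∫ t in Set.Icc (-π) π, ((η t : ℝ):ℂ) * Mden t)) := by
    ring
  rw [dist_eq_norm, hsumdec, hintdec, hdecomp]
  refine lt_of_le_of_lt (le_trans (norm_sub_le _ _)
    (add_le_add_left (norm_add_le _ _) _)) ?_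
  have hsum3 := add_lt_add_of_lt_of_le (add_lt_add_of_lt_of_le hGdist hηavgnorm) hLηnorm
  refine lt_of_lt_of_le hsum3 ?_
  clear_value C B Q δ
  linarith [hCfact, hQδ]
end

section
/- Let (N_d)_{d≥1} be a sequence of integers of the form N_d = a^d + 1 − c_d where a ∈ ℤ and c_d = 0 for d odd, c_d = 2n k^{d/2} for d even (k, n ∈ ℕ). Then for every m ∈ ℕ, ∑_{d|m} μ(m/d) N_d ≡ 0 (mod m), where μ is the Möbius function; hence B_m = (1/m) ∑_{d|m} μ(m/d) N_d is an integer. -/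
open ArithmeticFunction Finset

lemma key_pp (p : ℕ) (hp : p.Prime) (ν : ℕ) (hν : 1 ≤ ν) (b : ℤ) :
    (p : ℤ) ^ ν ∣ b ^ p ^ ν - b ^ p ^ (ν - 1) := by
  have h1 : (p : ℤ) ∣ b ^ p - b := by
    haveI := Fact.mk hp
    have := ZMod.pow_card (b : ZMod p)
    rwa [← Int.cast_pow, ← sub_eq_zero, ← Int.cast_sub,
      ZMod.intCast_zmod_eq_zero_iff_dvd] at this
  have h2 := dvd_sub_pow_of_dvd_sub h1 (ν - 1)
  rw [← pow_mul, ← pow_succ'] at h2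
  rwa [Nat.sub_add_cancel hν] at h2

lemma divpos {m p : ℕ} (hpm : p ∣ m) (hm : m ≠ 0) (hp : p ≠ 0) : m / p ≠ 0 :=
  (Nat.div_pos (Nat.le_of_dvd (Nat.pos_of_ne_zero hm) hpm) (Nat.pos_of_ne_zero hp)).ne'

lemma filter_dvd_divisors (p m : ℕ) (hp0 : p ≠ 0) (hpm : p ∣ m) (hm : m ≠ 0) :
    m.divisors.filter (p ∣ ·) = (m / p).divisors.image (p * ·) := by
  ext e
  simp only [mem_filter, Nat.mem_divisors, mem_image]
  constructor
  · rintro ⟨⟨he, -⟩, f, rfl⟩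
    exact ⟨f, ⟨(Nat.dvd_div_iff_mul_dvd hpm).2 he, divpos hpm hm hp0⟩, rfl⟩
  · rintro ⟨f, ⟨hf, -⟩, rfl⟩
    exact ⟨⟨(Nat.dvd_div_iff_mul_dvd hpm).1 hf, hm⟩, f, rfl⟩

lemma gauss_cong (a : ℤ) (m : ℕ) (hm : 1 ≤ m) :
    (m : ℤ) ∣ ∑ d ∈ m.divisors, (moebius (m / d) : ℤ) * a ^ d := by
  have hm0 : m ≠ 0 := by omega
  have flip : ∑ d ∈ m.divisors, (moebius (m / d) : ℤ) * a ^ d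
      = ∑ e ∈ m.divisors, (moebius e : ℤ) * a ^ (m / e) := by
    rw [← Nat.sum_div_divisors m (fun e => (moebius e : ℤ) * a ^ (m / e))]
    exact Finset.sum_congr rfl fun d hd => by
      rw [Nat.div_div_self (Nat.mem_divisors.1 hd).1 hm0]
  rw [flip]
  set S := ∑ e ∈ m.divisors, (moebius e : ℤ) * a ^ (m / e) with hS
  have hpp : ∀ p ∈ m.primeFactors, ((p : ℤ) ^ m.factorization p) ∣ S := by
    intro p hp
    rw [Nat.mem_primeFactors] at hp
    obtain ⟨hp, hpm, -⟩ := hp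
    have hp0 : p ≠ 0 := hp.ne_zero
    set ν := m.factorization p with hνdef
    have hν1 : 1 ≤ ν := hp.factorization_pos_of_dvd hm0 hpm
    have hmp0 : m / p ≠ 0 := divpos hpm hm0 hp0
    rw [hS, ← Finset.sum_filter_add_sum_filter_not m.divisors (p ∣ ·)]
    have partB : ∑ e ∈ m.divisors.filter (p ∣ ·), (moebius e : ℤ) * a ^ (m / e)
        = ∑ f ∈ (m / p).divisors, (moebius (p * f) : ℤ) * a ^ (m / p / f) := by
      rw [filter_dvd_divisors p m hp0 hpm hm0, Finset.sum_image
        (fun x _ y _ h => Nat.eq_of_mul_eq_mul_left (Nat.pos_of_ne_zero hp0) h)]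
      exact Finset.sum_congr rfl fun f hf => by rw [Nat.div_div_eq_div_mul]
    have partA : m.divisors.filter (fun e => ¬ p ∣ e)
        = (m / p).divisors.filter (fun e => ¬ p ∣ e) := by
      ext e
      simp only [mem_filter, Nat.mem_divisors]
      constructor
      · rintro ⟨⟨he, -⟩, hpe⟩
        refine ⟨⟨(Nat.dvd_div_iff_mul_dvd hpm).2 ?_, hmp0⟩, hpe⟩
        exact Nat.Coprime.mul_dvd_of_dvd_of_dvd
          ((Nat.Prime.coprime_iff_not_dvd hp).2 hpe) hpm he
      · rintro ⟨⟨he, -⟩, hpe⟩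
        exact ⟨⟨he.trans (Nat.div_dvd_of_dvd hpm), hm0⟩, hpe⟩
    have partB2 : ∑ f ∈ (m / p).divisors, (moebius (p * f) : ℤ) * a ^ (m / p / f)
        = ∑ f ∈ (m / p).divisors.filter (fun e => ¬ p ∣ e),
            -(moebius f : ℤ) * a ^ (m / p / f) := by
      rw [← Finset.sum_filter_add_sum_filter_not (m / p).divisors (p ∣ ·)]
      have h0 : ∑ f ∈ (m / p).divisors.filter (p ∣ ·),
          (moebius (p * f) : ℤ) * a ^ (m / p / f) = 0 := by
        apply Finset.sum_eq_zero
        intro f hf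
        obtain ⟨-, hpf⟩ := Finset.mem_filter.1 hf
        have hns : ¬ Squarefree (p * f) := fun hsq =>
          hp.one_lt.ne' (Nat.isUnit_iff.1 (hsq p (mul_dvd_mul_left p hpf)))
        rw [moebius_eq_zero_of_not_squarefree hns]
        simp
      rw [h0, zero_add]
      apply Finset.sum_congr rfl
      intro f hf
      obtain ⟨-, hpf⟩ := Finset.mem_filter.1 hf
      rw [isMultiplicative_moebius.map_mul_of_coprime
        ((Nat.Prime.coprime_iff_not_dvd hp).2 hpf), moebius_apply_prime hp]
      ring
    rw [partA, partB, partB2, ← Finset.sum_add_distrib]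
    apply Finset.dvd_sum
    intro f hf
    obtain ⟨hfmem, hpf⟩ := Finset.mem_filter.1 hf
    obtain ⟨hfdvd, -⟩ := Nat.mem_divisors.1 hfmem
    have hf0 : f ≠ 0 := fun h => hmp0 (Nat.eq_zero_of_zero_dvd (h ▸ hfdvd))
    have hcop : Nat.Coprime f (p ^ ν) :=
      (((Nat.Prime.coprime_iff_not_dvd hp).2 hpf).symm).pow_right ν
    have hdvdm : f * p ^ ν ∣ m :=
      Nat.Coprime.mul_dvd_of_dvd_of_dvd hcop
        (hfdvd.trans (Nat.div_dvd_of_dvd hpm)) (Nat.ordProj_dvd m p)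
    obtain ⟨cc, hcc⟩ := hdvdm
    have hpν : p * p ^ (ν - 1) = p ^ ν := by
      rw [← pow_succ', Nat.sub_add_cancel hν1]
    have hmf : m / f = p ^ ν * cc := by
      rw [hcc, mul_assoc, Nat.mul_div_cancel_left _ (Nat.pos_of_ne_zero hf0)]
    have hmpf : m / p / f = p ^ (ν - 1) * cc := by
      rw [Nat.div_div_eq_div_mul, mul_comm p f]
      have : m = f * p * (p ^ (ν - 1) * cc) := by
        rw [hcc, ← hpν]; ring
      rw [this, Nat.mul_div_cancel_left _
        (Nat.pos_of_ne_zero (mul_ne_zero hf0 hp0))]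
    have hkey := key_pp p hp ν hν1 (a ^ cc)
    have heq : -(moebius f : ℤ) * a ^ (m / p / f) + (moebius f : ℤ) * a ^ (m / f)
        = (moebius f : ℤ) * ((a ^ cc) ^ p ^ ν - (a ^ cc) ^ p ^ (ν - 1)) := by
      rw [hmf, hmpf, mul_comm (p ^ ν) cc, mul_comm (p ^ (ν - 1)) cc, pow_mul, pow_mul]
      ring
    rw [heq]
    exact hkey.mul_left _
  have hprod : (m : ℤ) = ∏ p ∈ m.primeFactors, (p : ℤ) ^ m.factorization p := by
    have h1 : m = ∏ p ∈ m.primeFactors, p ^ m.factorization p := by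
      conv_lhs => rw [← Nat.factorization_prod_pow_eq_self hm0]
      rfl
    calc (m : ℤ) = ((∏ p ∈ m.primeFactors, p ^ m.factorization p : ℕ) : ℤ) := by
          rw [← h1]
      _ = ∏ p ∈ m.primeFactors, (p : ℤ) ^ m.factorization p := by norm_cast
  rw [hprod]
  apply Finset.prod_dvd_of_coprime
  · intro p hp q hq hpq
    have hp' := Nat.prime_of_mem_primeFactors hp
    have hq' := Nat.prime_of_mem_primeFactors hq
    exact ((Nat.isCoprime_iff_coprime.2 ((Nat.coprime_primes hp' hq').2 hpq)).pow :)
  · exact fun p hp => hpp p hp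

/-- For the integer sequence `N_d = a^d + 1 - c_d` (with `c_d = 0` for odd `d`
and `c_d = 2n k^{d/2}` for even `d`), every Möbius-inverted sum
`∑_{d∣m} μ(m/d) N_d` is divisible by `m`, so `B_m` is an integer. -/
theorem moebius_sum_divisible (a : ℤ) (k n : ℕ)
    (c : ℕ → ℤ) (hc : ∀ d : ℕ, c d = if Odd d then 0 else 2 * n * (k : ℤ) ^ (d / 2))
    (N : ℕ → ℤ) (hN : ∀ d : ℕ, 1 ≤ d → N d = a ^ d + 1 - c d) :
    ∀ m : ℕ, 1 ≤ m →
      (m : ℤ) ∣ ∑ d ∈ m.divisors, (moebius (m / d) : ℤ) * N d := by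
  intro m hm
  have hm0 : m ≠ 0 := by omega
  have hsplit : ∑ d ∈ m.divisors, (moebius (m / d) : ℤ) * N d
      = ((∑ d ∈ m.divisors, (moebius (m / d) : ℤ) * a ^ d)
          + ∑ d ∈ m.divisors, (moebius (m / d) : ℤ))
        - ∑ d ∈ m.divisors, (moebius (m / d) : ℤ) * c d := by
    rw [← Finset.sum_add_distrib, ← Finset.sum_sub_distrib]
    refine Finset.sum_congr rfl fun d hd => ?_
    rw [hN d (Nat.pos_of_mem_divisors hd)]; ring
  rw [hsplit]
  refine dvd_sub (dvd_add (gauss_cong a m hm) ?_) ?_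
  · have hflip : ∑ d ∈ m.divisors, (moebius (m / d) : ℤ)
        = ∑ e ∈ m.divisors, (moebius e : ℤ) := by
      rw [← Nat.sum_div_divisors m (fun e => (moebius e : ℤ))]
    rw [hflip, ← coe_mul_zeta_apply, moebius_mul_coe_zeta]
    rcases eq_or_ne m 1 with rfl | h
    · simp
    · simp [one_apply, h]
  · rcases Nat.even_or_odd m with hme | hmo
    · -- m even
      have h2m : 2 ∣ m := hme.two_dvd
      have hm2 : 1 ≤ m / 2 := Nat.pos_of_ne_zero (divpos h2m hm0 two_ne_zero)
      have hzero : ∑ d ∈ m.divisors, (moebius (m / d) : ℤ) * c d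
          = ∑ d ∈ m.divisors.filter (2 ∣ ·), (moebius (m / d) : ℤ) * c d := by
        rw [← Finset.sum_filter_add_sum_filter_not m.divisors (2 ∣ ·)]
        have h0 : ∑ d ∈ m.divisors.filter (fun d => ¬ 2 ∣ d),
            (moebius (m / d) : ℤ) * c d = 0 := by
          refine Finset.sum_eq_zero fun d hd => ?_
          obtain ⟨-, h2d⟩ := Finset.mem_filter.1 hd
          rw [hc d, if_pos (Nat.odd_iff.2 (by omega)), mul_zero]
        rw [h0, add_zero]
      rw [hzero, filter_dvd_divisors 2 m two_ne_zero h2m hm0,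
        Finset.sum_image (fun x _ y _ h => by omega)]
      have hrw : ∀ f ∈ (m / 2).divisors, (moebius (m / (2 * f)) : ℤ) * c (2 * f)
          = (2 * n : ℤ) * ((moebius ((m / 2) / f) : ℤ) * (k : ℤ) ^ f) := by
        intro f hf
        rw [hc (2 * f), if_neg (by simp [Nat.odd_iff, Nat.mul_mod_right]),
          Nat.mul_div_cancel_left f two_pos, ← Nat.div_div_eq_div_mul]
        ring
      rw [Finset.sum_congr rfl hrw, ← Finset.mul_sum]
      have hG := gauss_cong (k : ℤ) (m / 2) hm2
      have hmeq : (m : ℤ) = 2 * ((m / 2 : ℕ) : ℤ) := by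
        omega
      obtain ⟨t, ht⟩ := hG
      rw [hmeq, ht]
      exact ⟨(n : ℤ) * t, by ring⟩
    · -- m odd
      have h0 : ∑ d ∈ m.divisors, (moebius (m / d) : ℤ) * c d = 0 := by
        refine Finset.sum_eq_zero fun d hd => ?_
        have hdm := (Nat.mem_divisors.1 hd).1
        obtain ⟨e, he⟩ := hdm
        rw [he] at hmo
        have : Odd d := (Nat.odd_mul.1 hmo).1
        rw [hc d, if_pos this, mul_zero]
      rw [h0]
      exact dvd_zero _
end
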